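/- arXiv:1106.6072 — 4 statements merged into one kernel-verified Lean document; each statement's English description precedes it below -/
import Mathlib

section
/- Let H ≥ 1 be an integer and let X_1, …, X_H be independent random variables, each uniformly distributed on the unit circle {z ∈ ℂ : |z| = 1}, and set Z_H = X_1 + ⋯ + X_H. If r and s are non-negative integers with r + s = 2m even, then E[(Re Z_H)^r (Im Z_H)^s] = B_m(H) · Σ_{0 ≤ j ≤ r, 0 ≤ k ≤ s, j+k = m} 2^{−r} (2i)^{−s} C(r,j) C(s,k) (−1)^{s−k}, where C(·,·) denotes binomial coefficients (the right-hand side is a real number). -/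
open MeasureTheory ProbabilityTheory Complex Finset


/-- The uniform probability measure on the unit circle `{z ∈ ℂ : |z| = 1}`. -/
noncomputable def uniformCircle : Measure ℂ :=
  Measure.map (fun t : ℝ => Complex.exp (2 * Real.pi * t * Complex.I))
    (volume.restrict (Set.Icc 0 1))

lemma phi_meas : Measurable (fun t : ℝ => Complex.exp (2 * Real.pi * t * Complex.I)) := by
  fun_prop

instance : IsProbabilityMeasure (volume.restrict (Set.Icc (0:ℝ) 1)) :=
  ⟨by simp⟩

instance : IsProbabilityMeasure uniformCircle :=
  Measure.isProbabilityMeasure_map phi_meas.aemeasurable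

lemma uniformCircle_moment (c d : ℕ) :
    ∫ z, z ^ c * (starRingEnd ℂ) z ^ d ∂uniformCircle = if c = d then 1 else 0 := by
  rw [uniformCircle, integral_map phi_meas.aemeasurable ((show Continuous (fun z : ℂ => z ^ c * (starRingEnd ℂ) z ^ d) from Continuous.mul (continuous_pow c) ((Complex.continuous_conj).pow d)).aestronglyMeasurable)]
  have key : ∀ t : ℝ,
      Complex.exp (2 * Real.pi * t * Complex.I) ^ c *
        (starRingEnd ℂ) (Complex.exp (2 * Real.pi * t * Complex.I)) ^ d
      = Complex.exp ((((c:ℂ) - d) * (2 * Real.pi * Complex.I)) * t) := by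
    intro t
    rw [← Complex.exp_conj, ← Complex.exp_nat_mul, ← Complex.exp_nat_mul, ← Complex.exp_add]
    congr 1
    simp only [map_mul, Complex.conj_ofReal, Complex.conj_I, map_ofNat]
    push_cast
    ring
  simp only [key]
  rw [show (∫ t in Set.Icc (0:ℝ) 1, Complex.exp ((((c:ℂ) - d) * (2 * Real.pi * Complex.I)) * t))
      = ∫ t in (0:ℝ)..1, Complex.exp ((((c:ℂ) - d) * (2 * Real.pi * Complex.I)) * t) by
    rw [intervalIntegral.integral_of_le (by norm_num), integral_Icc_eq_integral_Ioc]]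
  by_cases h : c = d
  · subst h
    simp
  · have hK : ((c:ℂ) - d) * (2 * Real.pi * Complex.I) ≠ 0 := by
      apply mul_ne_zero
      · rw [sub_ne_zero]
        exact_mod_cast fun hcd => h (Nat.cast_injective hcd)
      · simp [Real.pi_ne_zero, Complex.I_ne_zero, Complex.ofReal_ne_zero]
    rw [integral_exp_mul_complex hK, if_neg h]
    have h1 : (((c:ℂ) - d) * (2 * Real.pi * Complex.I)) * ((1:ℝ):ℂ) = ((((c:ℤ) - (d:ℤ) : ℤ)):ℂ) * (2 * Real.pi * Complex.I) := by
      push_cast; ring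
    rw [h1, Complex.exp_int_mul_two_pi_mul_I ((c:ℤ) - (d:ℤ))]
    simp


lemma indepFun_integral_mul_complex {Ω : Type*} [MeasurableSpace Ω] {μ : Measure Ω}
    {Z W : Ω → ℂ} (h : IndepFun Z W μ) (hZ : Integrable Z μ) (hW : Integrable W μ) :
    ∫ ω, Z ω * W ω ∂μ = (∫ ω, Z ω ∂μ) * ∫ ω, W ω ∂μ := by
  have hAi : Integrable (fun ω => (Z ω).re) μ := hZ.re
  have hBi : Integrable (fun ω => (Z ω).im) μ := hZ.im
  have hCi : Integrable (fun ω => (W ω).re) μ := hW.re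
  have hDi : Integrable (fun ω => (W ω).im) μ := hW.im
  have iAC : IndepFun (fun ω => (Z ω).re) (fun ω => (W ω).re) μ :=
    h.comp Complex.measurable_re Complex.measurable_re
  have iAD : IndepFun (fun ω => (Z ω).re) (fun ω => (W ω).im) μ :=
    h.comp Complex.measurable_re Complex.measurable_im
  have iBC : IndepFun (fun ω => (Z ω).im) (fun ω => (W ω).re) μ :=
    h.comp Complex.measurable_im Complex.measurable_re
  have iBD : IndepFun (fun ω => (Z ω).im) (fun ω => (W ω).im) μ :=
    h.comp Complex.measurable_im Complex.measurable_im
  have eAC : ∫ ω, (Z ω).re * (W ω).re ∂μ = (∫ ω, (Z ω).re ∂μ) * ∫ ω, (W ω).re ∂μ :=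
    ProbabilityTheory.IndepFun.integral_fun_mul_eq_mul_integral iAC hAi.aestronglyMeasurable hCi.aestronglyMeasurable
  have eAD : ∫ ω, (Z ω).re * (W ω).im ∂μ = (∫ ω, (Z ω).re ∂μ) * ∫ ω, (W ω).im ∂μ :=
    ProbabilityTheory.IndepFun.integral_fun_mul_eq_mul_integral iAD hAi.aestronglyMeasurable hDi.aestronglyMeasurable
  have eBC : ∫ ω, (Z ω).im * (W ω).re ∂μ = (∫ ω, (Z ω).im ∂μ) * ∫ ω, (W ω).re ∂μ :=
    ProbabilityTheory.IndepFun.integral_fun_mul_eq_mul_integral iBC hBi.aestronglyMeasurable hCi.aestronglyMeasurable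
  have eBD : ∫ ω, (Z ω).im * (W ω).im ∂μ = (∫ ω, (Z ω).im ∂μ) * ∫ ω, (W ω).im ∂μ :=
    ProbabilityTheory.IndepFun.integral_fun_mul_eq_mul_integral iBD hBi.aestronglyMeasurable hDi.aestronglyMeasurable
  have hACi : Integrable (fun ω => (Z ω).re * (W ω).re) μ := iAC.integrable_mul hAi hCi
  have hADi : Integrable (fun ω => (Z ω).re * (W ω).im) μ := iAD.integrable_mul hAi hDi
  have hBCi : Integrable (fun ω => (Z ω).im * (W ω).re) μ := iBC.integrable_mul hBi hCi
  have hBDi : Integrable (fun ω => (Z ω).im * (W ω).im) μ := iBD.integrable_mul hBi hDi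
  have hZW : Integrable (fun ω => Z ω * W ω) μ := by
    rw [← Integrable.re_im_iff]
    constructor
    · have : (fun ω => RCLike.re (Z ω * W ω)) =
          fun ω => (Z ω).re * (W ω).re - (Z ω).im * (W ω).im := by
        funext ω; simp [Complex.mul_re]
      rw [this]; exact hACi.sub hBDi
    · have : (fun ω => RCLike.im (Z ω * W ω)) =
          fun ω => (Z ω).re * (W ω).im + (Z ω).im * (W ω).re := by
        funext ω; simp [Complex.mul_im]
      rw [this]; exact hADi.add hBCi
  apply Complex.ext
  · have h1 : (∫ ω, Z ω * W ω ∂μ).re = ∫ ω, (Z ω * W ω).re ∂μ := by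
      rw [← RCLike.re_to_complex]
      exact (integral_re hZW).symm
    rw [h1]
    have h2 : ∫ ω, (Z ω * W ω).re ∂μ =
        (∫ ω, (Z ω).re * (W ω).re ∂μ) - ∫ ω, (Z ω).im * (W ω).im ∂μ := by
      refine (integral_congr_ae (Filter.Eventually.of_forall fun ω => ?_)).trans
        (integral_sub hACi hBDi)
      exact Complex.mul_re _ _
    rw [h2]
    have hZr : ∫ ω, (Z ω).re ∂μ = (∫ ω, Z ω ∂μ).re := integral_re hZ
    have hZi : ∫ ω, (Z ω).im ∂μ = (∫ ω, Z ω ∂μ).im := integral_im hZ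
    have hWr : ∫ ω, (W ω).re ∂μ = (∫ ω, W ω ∂μ).re := integral_re hW
    have hWi : ∫ ω, (W ω).im ∂μ = (∫ ω, W ω ∂μ).im := integral_im hW
    rw [eAC, eBD, hZr, hZi, hWr, hWi, Complex.mul_re]
  · have h1 : (∫ ω, Z ω * W ω ∂μ).im = ∫ ω, (Z ω * W ω).im ∂μ := by
      rw [← RCLike.im_to_complex]
      exact (integral_im hZW).symm
    rw [h1]
    have h2 : ∫ ω, (Z ω * W ω).im ∂μ =
        (∫ ω, (Z ω).re * (W ω).im ∂μ) + ∫ ω, (Z ω).im * (W ω).re ∂μ := by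
      refine (integral_congr_ae (Filter.Eventually.of_forall fun ω => ?_)).trans
        (integral_add hADi hBCi)
      exact Complex.mul_im _ _
    rw [h2]
    have hZr : ∫ ω, (Z ω).re ∂μ = (∫ ω, Z ω ∂μ).re := integral_re hZ
    have hZi : ∫ ω, (Z ω).im ∂μ = (∫ ω, Z ω ∂μ).im := integral_im hZ
    have hWr : ∫ ω, (W ω).re ∂μ = (∫ ω, W ω ∂μ).re := integral_re hW
    have hWi : ∫ ω, (W ω).im ∂μ = (∫ ω, W ω ∂μ).im := integral_im hW
    rw [eAD, eBC, hZr, hZi, hWr, hWi, Complex.mul_im]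



lemma ae_abs_eq_one {Ω : Type*} [MeasurableSpace Ω] (μ : Measure Ω) {X : Ω → ℂ}
    (hX : Measurable X) (h : Measure.map X μ = uniformCircle) :
    ∀ᵐ ω ∂μ, ‖X ω‖ = 1 := by
  have hs : MeasurableSet {z : ℂ | ‖z‖ = 1} :=
    continuous_norm.measurable (measurableSet_singleton 1)
  rw [Filter.eventually_iff, mem_ae_iff]
  have : {ω | ‖X ω‖ = 1}ᶜ = X ⁻¹' {z : ℂ | ‖z‖ = 1}ᶜ := rfl
  rw [this, ← Measure.map_apply hX hs.compl, h, uniformCircle,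
    Measure.map_apply phi_meas hs.compl]
  have : (fun t : ℝ => Complex.exp (2 * Real.pi * t * Complex.I)) ⁻¹'
      {z : ℂ | ‖z‖ = 1}ᶜ = ∅ := by
    ext t
    simp [Complex.norm_exp]
  rw [this]
  simp

lemma moment_one {Ω : Type*} [MeasurableSpace Ω] (μ : Measure Ω) {X : Ω → ℂ}
    (hX : Measurable X) (h : Measure.map X μ = uniformCircle) (c d : ℕ) :
    ∫ ω, X ω ^ c * (starRingEnd ℂ) (X ω) ^ d ∂μ = if c = d then 1 else 0 := by
  rw [← uniformCircle_moment c d, ← h,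
    integral_map hX.aemeasurable
      ((show Continuous (fun z : ℂ => z ^ c * (starRingEnd ℂ) z ^ d) from Continuous.mul (continuous_pow c) ((Complex.continuous_conj).pow d)).aestronglyMeasurable)]

lemma integral_prod_indep {Ω ι : Type*} [MeasurableSpace Ω] (μ : Measure Ω)
    [IsProbabilityMeasure μ] (Y : ι → Ω → ℂ) (hmeas : ∀ i, Measurable (Y i))
    (hind : iIndepFun Y μ)
    (hbd : ∀ᵐ ω ∂μ, ∀ i, ‖Y i ω‖ ≤ 1) (s : Finset ι) :
    ∫ ω, ∏ i ∈ s, Y i ω ∂μ = ∏ i ∈ s, ∫ ω, Y i ω ∂μ := by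
  classical
  have hint : ∀ t : Finset ι, Integrable (fun ω => ∏ i ∈ t, Y i ω) μ := by
    intro t
    apply Integrable.mono' (integrable_const (1 : ℝ))
      ((Finset.measurable_prod _ fun i _ => hmeas i).aestronglyMeasurable)
    filter_upwards [hbd] with ω hω
    rw [norm_prod]
    exact Finset.prod_le_one (fun i _ => norm_nonneg _) (fun i _ => hω i)
  induction s using Finset.induction_on with
  | empty => simp
  | @insert a s ha ih =>
    simp only [Finset.prod_insert ha]
    have hprodfn : (fun ω => ∏ i ∈ s, Y i ω) = ∏ i ∈ s, Y i := by
      funext ω; simp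
    have hip : IndepFun (Y a) (fun ω => ∏ i ∈ s, Y i ω) μ := by
      rw [hprodfn]
      exact (hind.indepFun_finsetProd_of_notMem hmeas ha).symm
    have hYa : Integrable (Y a) μ := by simpa using hint {a}
    exact (indepFun_integral_mul_complex hip hYa (hint s)).trans (by rw [ih])

lemma expand_re_im (z : ℂ) (r s : ℕ) :
    ((z.re : ℂ)) ^ r * ((z.im : ℂ)) ^ s =
      ∑ j ∈ Finset.range (r + 1), ∑ k ∈ Finset.range (s + 1),
        (((2:ℂ) ^ r)⁻¹ * ((2 * Complex.I) ^ s)⁻¹ * (r.choose j : ℂ) * (s.choose k : ℂ)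
            * (-1 : ℂ) ^ (s - k)) *
          (z ^ (j + k) * (starRingEnd ℂ) z ^ ((r - j) + (s - k))) := by
  have hre : ((z.re : ℂ)) = (z + (starRingEnd ℂ) z) / 2 := by
    rw [Complex.add_conj]; push_cast; ring
  have him : ((z.im : ℂ)) = (z - (starRingEnd ℂ) z) / (2 * Complex.I) := by
    rw [Complex.sub_conj]
    field_simp
    push_cast
    ring
  rw [hre, him, div_pow, div_pow, sub_eq_add_neg, add_pow, add_pow,
    Finset.sum_div, Finset.sum_div, Finset.sum_mul_sum]
  refine Finset.sum_congr rfl fun j hj => Finset.sum_congr rfl fun k hk => ?_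
  rw [neg_pow]
  ring



/-- `B_m(H)`: the number of tuples `(y_1,…,y_m,z_1,…,z_m)` of integers in `{1,…,H}` such that
the multisets `{y_1,…,y_m}` and `{z_1,…,z_m}` coincide. -/
noncomputable def Bcount (m H : ℕ) : ℕ :=
  Nat.card {p : (Fin m → ℕ) × (Fin m → ℕ) //
    (∀ j, p.1 j ∈ Finset.Icc 1 H) ∧ (∀ j, p.2 j ∈ Finset.Icc 1 H) ∧
    Multiset.map p.1 Finset.univ.val = Multiset.map p.2 Finset.univ.val}

lemma bcount_eq (a H : ℕ) :
    Bcount a H = (Finset.univ.filter (fun p : (Fin a → Fin H) × (Fin a → Fin H) =>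
      Multiset.map p.1 Finset.univ.val = Multiset.map p.2 Finset.univ.val)).card := by
  classical
  have key : ∀ (f : Fin a → Fin H),
      Multiset.map (fun i => (f i : ℕ) + 1) (Finset.univ.val : Multiset (Fin a)) =
        Multiset.map (fun n : Fin H => (n : ℕ) + 1) (Multiset.map f Finset.univ.val) := by
    intro f; rw [Multiset.map_map]; rfl
  have e : {p : (Fin a → Fin H) × (Fin a → Fin H) //
      Multiset.map p.1 Finset.univ.val = Multiset.map p.2 Finset.univ.val} ≃
      {p : (Fin a → ℕ) × (Fin a → ℕ) //
      (∀ j, p.1 j ∈ Finset.Icc 1 H) ∧ (∀ j, p.2 j ∈ Finset.Icc 1 H) ∧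
      Multiset.map p.1 Finset.univ.val = Multiset.map p.2 Finset.univ.val} := by
    refine
      { toFun := fun q => ⟨((fun i => (q.1.1 i : ℕ) + 1), (fun i => (q.1.2 i : ℕ) + 1)), ?_, ?_, ?_⟩
        invFun := fun q => ⟨((fun i => ⟨q.1.1 i - 1, ?_⟩), (fun i => ⟨q.1.2 i - 1, ?_⟩)), ?_⟩
        left_inv := ?_
        right_inv := ?_ }
    · intro j; simp only [Finset.mem_Icc]; exact ⟨Nat.le_add_left 1 _, (q.1.1 j).isLt⟩
    · intro j; simp only [Finset.mem_Icc]; exact ⟨Nat.le_add_left 1 _, (q.1.2 j).isLt⟩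
    · rw [key, key, q.2]
    · have := q.2.1 i; simp only [Finset.mem_Icc] at this; omega
    · have := q.2.2.1 i; simp only [Finset.mem_Icc] at this; omega
    · apply Multiset.map_injective (Fin.val_injective)
      rw [Multiset.map_map, Multiset.map_map]
      have h3 := q.2.2.2
      have e1 : ∀ (f : Fin a → ℕ),
          Multiset.map (fun n => n - 1) (Multiset.map f Finset.univ.val) =
            Multiset.map (fun i => f i - 1) (Finset.univ.val : Multiset (Fin a)) :=
        fun f => Multiset.map_map _ _ _
      show Multiset.map (fun i => q.1.1 i - 1) Finset.univ.val =
        Multiset.map (fun i => q.1.2 i - 1) Finset.univ.val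
      rw [← e1, ← e1, h3]
    · rintro ⟨⟨f, g⟩, h⟩
      apply Subtype.ext
      simp only [Prod.mk.injEq]
      constructor <;> (funext i; apply Fin.ext; simp)
    · rintro ⟨⟨f, g⟩, h1, h2, h3⟩
      apply Subtype.ext
      simp only [Prod.mk.injEq]
      constructor <;> funext i
      · have := h1 i; simp only [Finset.mem_Icc] at this
        show f i - 1 + 1 = f i; omega
      · have := h2 i; simp only [Finset.mem_Icc] at this
        show g i - 1 + 1 = g i; omega
  rw [Bcount, ← Nat.card_congr e, Nat.card_eq_fintype_card, Fintype.card_subtype]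

lemma multiset_eq_iff_counts {a b H : ℕ} (f : Fin a → Fin H) (g : Fin b → Fin H) :
    Multiset.map f Finset.univ.val = Multiset.map g Finset.univ.val ↔
    ∀ j : Fin H, (Finset.univ.filter fun i => f i = j).card
      = (Finset.univ.filter fun i => g i = j).card := by
  classical
  rw [Multiset.ext]
  apply forall_congr'
  intro j
  rw [Multiset.count_map, Multiset.count_map]
  have key : ∀ (c : ℕ) (h : Fin c → Fin H),
      Multiset.card (Multiset.filter (fun i => j = h i) (Finset.univ.val : Multiset (Fin c)))
        = (Finset.univ.filter fun i => h i = j).card := by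
    intro c h
    rw [show (Finset.univ.filter fun i => h i = j) = Finset.univ.filter (fun i => j = h i) by
      apply Finset.filter_congr; intro x _; exact eq_comm]
    rfl
  rw [key, key]

lemma card_pairs (H a b m : ℕ) (hab : a + b = 2 * m) :
    (Finset.univ.filter (fun p : (Fin a → Fin H) × (Fin b → Fin H) =>
      ∀ j : Fin H, (Finset.univ.filter fun i => p.1 i = j).card
        = (Finset.univ.filter fun i => p.2 i = j).card)).card
    = if a = m then Bcount m H else 0 := by
  classical
  by_cases h : a = m
  · subst h
    have hb : b = a := by omega
    subst hb
    rw [if_pos rfl, bcount_eq]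
    congr 1
    apply Finset.filter_congr
    intro p _
    exact (multiset_eq_iff_counts p.1 p.2).symm
  · rw [if_neg h, Finset.card_eq_zero, Finset.filter_eq_empty_iff]
    intro p _
    intro hp
    have h1 : a = ∑ j : Fin H, (Finset.univ.filter fun i => p.1 i = j).card := by
      have := Finset.card_eq_sum_card_fiberwise
        (f := p.1) (s := Finset.univ) (t := Finset.univ) (fun i _ => Finset.mem_univ _)
      simpa using this
    have h2 : b = ∑ j : Fin H, (Finset.univ.filter fun i => p.2 i = j).card := by
      have := Finset.card_eq_sum_card_fiberwise
        (f := p.2) (s := Finset.univ) (t := Finset.univ) (fun i _ => Finset.mem_univ _)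
      simpa using this
    have hsum : (∑ j : Fin H, (Finset.univ.filter fun i => p.1 i = j).card)
        = ∑ j : Fin H, (Finset.univ.filter fun i => p.2 i = j).card :=
      Finset.sum_congr rfl fun j _ => hp j
    have : a = b := h1.trans (hsum.trans h2.symm)
    omega



lemma key_moment {Ω : Type*} [MeasurableSpace Ω] (μ : Measure Ω) [IsProbabilityMeasure μ]
    (H : ℕ) (X : Fin H → Ω → ℂ)
    (hmeas : ∀ j, Measurable (X j))
    (hindep : iIndepFun X μ)
    (hunif : ∀ j, Measure.map (X j) μ = uniformCircle)
    (a b : ℕ) :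
    ∫ ω, (∑ j, X j ω) ^ a * (starRingEnd ℂ) (∑ j, X j ω) ^ b ∂μ =
      ((Finset.univ.filter (fun p : (Fin a → Fin H) × (Fin b → Fin H) =>
        ∀ j : Fin H, (Finset.univ.filter fun i => p.1 i = j).card
          = (Finset.univ.filter fun i => p.2 i = j).card)).card : ℂ) := by
  classical
  have habs : ∀ᵐ ω ∂μ, ∀ j, ‖X j ω‖ = 1 :=
    MeasureTheory.ae_all_iff.mpr fun j => ae_abs_eq_one μ (hmeas j) (hunif j)
  -- expansion of the power into a sum over tuples
  have step1 : ∀ ω, (∑ j, X j ω) ^ a * (starRingEnd ℂ) (∑ j, X j ω) ^ b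
      = ∑ p : (Fin a → Fin H) × (Fin b → Fin H),
          (∏ i, X (p.1 i) ω) * ∏ i, (starRingEnd ℂ) (X (p.2 i) ω) := by
    intro ω
    rw [map_sum, Fintype.sum_pow, Fintype.sum_pow, Finset.sum_mul_sum, Fintype.sum_prod_type]
  have hFmeas : ∀ p : (Fin a → Fin H) × (Fin b → Fin H),
      Measurable (fun ω => (∏ i, X (p.1 i) ω) * ∏ i, (starRingEnd ℂ) (X (p.2 i) ω)) := by
    intro p
    apply Measurable.mul
    · exact Finset.measurable_prod _ fun i _ => hmeas _
    · exact Finset.measurable_prod _ fun i _ =>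
        (RCLike.continuous_conj.measurable).comp (hmeas _)
  have hFint : ∀ p : (Fin a → Fin H) × (Fin b → Fin H),
      Integrable (fun ω => (∏ i, X (p.1 i) ω) * ∏ i, (starRingEnd ℂ) (X (p.2 i) ω)) μ := by
    intro p
    apply Integrable.mono' (integrable_const (1 : ℝ)) (hFmeas p).aestronglyMeasurable
    filter_upwards [habs] with ω hω
    rw [norm_mul, norm_prod, norm_prod]
    have h1 : ∀ i, ‖X (p.1 i) ω‖ = 1 := fun i => by
      rw [hω]
    have h2 : ∀ i, ‖(starRingEnd ℂ) (X (p.2 i) ω)‖ = 1 := fun i => by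
      rw [RCLike.norm_conj, hω]
    rw [Finset.prod_congr rfl fun i _ => h1 i, Finset.prod_congr rfl fun i _ => h2 i]
    simp
  -- swap integral and sum
  rw [integral_congr_ae (Filter.Eventually.of_forall step1),
    integral_finset_sum _ fun p _ => hFint p]
  -- compute each summand
  have step3 : ∀ p : (Fin a → Fin H) × (Fin b → Fin H),
      (∫ ω, (∏ i, X (p.1 i) ω) * ∏ i, (starRingEnd ℂ) (X (p.2 i) ω) ∂μ)
        = if (∀ j : Fin H, (Finset.univ.filter fun i => p.1 i = j).card
            = (Finset.univ.filter fun i => p.2 i = j).card) then 1 else 0 := by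
    intro p
    set c : Fin H → ℕ := fun j => (Finset.univ.filter fun i => p.1 i = j).card with hc
    set d : Fin H → ℕ := fun j => (Finset.univ.filter fun i => p.2 i = j).card with hd
    have h1 : ∀ ω, (∏ i, X (p.1 i) ω) = ∏ j : Fin H, (X j ω) ^ (c j) := by
      intro ω
      rw [← Finset.prod_fiberwise Finset.univ p.1 (fun i => X (p.1 i) ω)]
      refine Finset.prod_congr rfl fun j _ => ?_
      rw [← Finset.prod_const]
      exact Finset.prod_congr rfl fun i hi => by rw [(Finset.mem_filter.mp hi).2]
    have h2 : ∀ ω, (∏ i, (starRingEnd ℂ) (X (p.2 i) ω))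
        = ∏ j : Fin H, ((starRingEnd ℂ) (X j ω)) ^ (d j) := by
      intro ω
      rw [← Finset.prod_fiberwise Finset.univ p.2 (fun i => (starRingEnd ℂ) (X (p.2 i) ω))]
      refine Finset.prod_congr rfl fun j _ => ?_
      rw [← Finset.prod_const]
      exact Finset.prod_congr rfl fun i hi => by rw [(Finset.mem_filter.mp hi).2]
    have h3 : ∀ ω, (∏ i, X (p.1 i) ω) * ∏ i, (starRingEnd ℂ) (X (p.2 i) ω)
        = ∏ j : Fin H, ((fun z => z ^ (c j) * (starRingEnd ℂ) z ^ (d j)) ∘ (X j)) ω := by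
      intro ω
      rw [h1, h2, ← Finset.prod_mul_distrib]
      rfl
    rw [integral_congr_ae (Filter.Eventually.of_forall h3)]
    have hYmeas : ∀ j, Measurable ((fun z => z ^ (c j) * (starRingEnd ℂ) z ^ (d j)) ∘ (X j)) := by
      intro j
      exact (((measurable_id.pow_const (c j)).mul
        ((RCLike.continuous_conj.measurable).pow_const (d j)))).comp (hmeas j)
    have hYind : iIndepFun
        (fun j => (fun z => z ^ (c j) * (starRingEnd ℂ) z ^ (d j)) ∘ (X j)) μ := by
      apply hindep.comp
      intro j
      exact (measurable_id.pow_const (c j)).mul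
        ((RCLike.continuous_conj.measurable).pow_const (d j))
    have hYbd : ∀ᵐ ω ∂μ, ∀ j : Fin H,
        ‖((fun z => z ^ (c j) * (starRingEnd ℂ) z ^ (d j)) ∘ (X j)) ω‖ ≤ 1 := by
      filter_upwards [habs] with ω hω
      intro j
      simp only [Function.comp_apply, norm_mul, norm_pow, RCLike.norm_conj,
        hω j, one_pow, mul_one, le_refl]
    rw [integral_prod_indep μ _ hYmeas hYind hYbd Finset.univ]
    have h4 : ∀ j, ∫ ω, ((fun z => z ^ (c j) * (starRingEnd ℂ) z ^ (d j)) ∘ (X j)) ω ∂μ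
        = if c j = d j then 1 else 0 := fun j => moment_one μ (hmeas j) (hunif j) (c j) (d j)
    rw [Finset.prod_congr rfl fun j _ => h4 j, Fintype.prod_boole]
    simp only [hc, hd]
  rw [Finset.sum_congr rfl fun p _ => step3 p, Finset.sum_boole]

/-- Lemma 2.1, even case: if `r + s = 2m` then
`E[(Re Z_H)^r (Im Z_H)^s] = B_m(H) ∑_{j+k=m} 2^{-r} (2i)^{-s} C(r,j) C(s,k) (-1)^{s-k}`. -/
theorem even_moments_formula
    {Ω : Type*} [MeasurableSpace Ω] (μ : Measure Ω) [IsProbabilityMeasure μ]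
    (H : ℕ) (hH : 1 ≤ H)
    (X : Fin H → Ω → ℂ)
    (hmeas : ∀ j, Measurable (X j))
    (hindep : iIndepFun X μ)
    (hunif : ∀ j, Measure.map (X j) μ = uniformCircle)
    (r s m : ℕ) (heven : r + s = 2 * m) :
    ((∫ ω, ((∑ j, X j ω).re ^ r * (∑ j, X j ω).im ^ s) ∂μ : ℝ) : ℂ) =
      (Bcount m H : ℂ) *
        ∑ j ∈ Finset.range (r + 1), ∑ k ∈ Finset.range (s + 1),
          if j + k = m then
            ((2 : ℂ) ^ r)⁻¹ * ((2 * Complex.I) ^ s)⁻¹ *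
              (r.choose j : ℂ) * (s.choose k : ℂ) * (-1 : ℂ) ^ (s - k)
          else 0 := by
  classical
  have habs : ∀ᵐ ω ∂μ, ∀ j, ‖X j ω‖ = 1 :=
    MeasureTheory.ae_all_iff.mpr fun j => ae_abs_eq_one μ (hmeas j) (hunif j)
  have hZmeas : Measurable (fun ω => ∑ j, X j ω) :=
    Finset.measurable_sum _ fun j _ => hmeas j
  have hZint : ∀ a b : ℕ,
      Integrable (fun ω => (∑ j, X j ω) ^ a * (starRingEnd ℂ) (∑ j, X j ω) ^ b) μ := by
    intro a b
    have hm : Measurable (fun ω => (∑ j, X j ω) ^ a * (starRingEnd ℂ) (∑ j, X j ω) ^ b) :=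
      (hZmeas.pow_const a).mul
        ((RCLike.continuous_conj.measurable.comp hZmeas).pow_const b)
    apply Integrable.mono' (integrable_const ((H : ℝ) ^ a * (H : ℝ) ^ b))
      hm.aestronglyMeasurable
    filter_upwards [habs] with ω hω
    rw [norm_mul, norm_pow, norm_pow, RCLike.norm_conj]
    have hle : ‖∑ j, X j ω‖ ≤ (H : ℝ) := by
      calc ‖∑ j, X j ω‖ ≤ ∑ j, ‖X j ω‖ := norm_sum_le _ _
      _ = (H : ℝ) := by simp [hω]
    exact mul_le_mul (pow_le_pow_left₀ (norm_nonneg _) hle a)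
      (pow_le_pow_left₀ (norm_nonneg _) hle b) (by positivity) (by positivity)
  have hofreal : ((∫ ω, ((∑ j, X j ω).re ^ r * (∑ j, X j ω).im ^ s) ∂μ : ℝ) : ℂ)
      = ∫ ω, (((∑ j, X j ω).re ^ r * (∑ j, X j ω).im ^ s : ℝ) : ℂ) ∂μ :=
    integral_ofReal.symm
  rw [hofreal]
  have hpt : ∀ ω : Ω, (((∑ j, X j ω).re ^ r * (∑ j, X j ω).im ^ s : ℝ) : ℂ)
      = ∑ j ∈ Finset.range (r + 1), ∑ k ∈ Finset.range (s + 1),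
        (((2:ℂ) ^ r)⁻¹ * ((2 * Complex.I) ^ s)⁻¹ * (r.choose j : ℂ) * (s.choose k : ℂ)
            * (-1 : ℂ) ^ (s - k)) *
          ((∑ j', X j' ω) ^ (j + k)
            * (starRingEnd ℂ) (∑ j', X j' ω) ^ ((r - j) + (s - k))) := by
    intro ω
    push_cast
    exact expand_re_im _ r s
  rw [integral_congr_ae (Filter.Eventually.of_forall hpt)]
  rw [integral_finset_sum _ fun j _ => integrable_finset_sum _ fun k _ =>
    (hZint (j + k) ((r - j) + (s - k))).const_mul _]
  have hterm : ∀ j ∈ Finset.range (r + 1), ∀ k ∈ Finset.range (s + 1),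
      (∫ ω, (((2:ℂ) ^ r)⁻¹ * ((2 * Complex.I) ^ s)⁻¹ * (r.choose j : ℂ) * (s.choose k : ℂ)
            * (-1 : ℂ) ^ (s - k)) *
          ((∑ j', X j' ω) ^ (j + k)
            * (starRingEnd ℂ) (∑ j', X j' ω) ^ ((r - j) + (s - k))) ∂μ)
      = (((2:ℂ) ^ r)⁻¹ * ((2 * Complex.I) ^ s)⁻¹ * (r.choose j : ℂ) * (s.choose k : ℂ)
            * (-1 : ℂ) ^ (s - k)) *
          ((if j + k = m then Bcount m H else 0 : ℕ) : ℂ) := by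
    intro j hj k hk
    rw [integral_const_mul, key_moment μ H X hmeas hindep hunif (j + k) ((r - j) + (s - k)),
      card_pairs H (j + k) ((r - j) + (s - k)) m
        (by simp only [Finset.mem_range] at hj hk; omega)]
  rw [Finset.sum_congr rfl fun j hj => integral_finset_sum _ fun k _ =>
    (hZint (j + k) ((r - j) + (s - k))).const_mul _]
  rw [Finset.sum_congr rfl fun j hj => Finset.sum_congr rfl fun k hk => hterm j hj k hk]
  rw [Finset.mul_sum]
  refine Finset.sum_congr rfl fun j hj => ?_
  rw [Finset.mul_sum]
  refine Finset.sum_congr rfl fun k hk => ?_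
  by_cases h : j + k = m
  · rw [if_pos h, if_pos h]
    push_cast
    ring
  · rw [if_neg h, if_neg h]
    simp
end

section
/- There is an absolute constant C > 0 with the following property. Let H ≥ 1 be an integer, let X_1, …, X_H be independent random variables uniformly distributed on the unit circle {z ∈ ℂ : |z| = 1}, set Z_H = X_1 + ⋯ + X_H and Z̃_H = Z_H/√(H/2). Then for all real numbers u, v with |u| ≤ H^{1/4} and |v| ≤ H^{1/4}, |E[exp(i u Re Z̃_H + i v Im Z̃_H)] − exp(−(u²+v²)/2)| ≤ C · exp(−(u²+v²)/2) · (u⁴+v⁴)/H. -/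
namespace RM32
open Real intervalIntegral MeasureTheory ProbabilityTheory



-- E1: Taylor lower bound for exp(-x) on [0,1]
lemma exp_neg_lb {x : ℝ} (h0 : 0 ≤ x) (h1 : x ≤ 1) :
    1 - x + x^2/2 - x^3/6 - (5/96)*x^4 ≤ Real.exp (-x) := by
  have hb := Real.exp_bound (x := -x) (by rwa [abs_neg, abs_of_nonneg h0]) (n := 4) (by norm_num)
  rw [abs_neg, abs_of_nonneg h0] at hb
  have h2 : ((Nat.succ 4 : ℕ) : ℝ) / ((Nat.factorial 4 : ℕ) * (4:ℕ)) = 5/96 := by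
    norm_num [Nat.factorial]
  rw [h2] at hb
  have h3 : (∑ i ∈ Finset.range 4, (-x)^i / (Nat.factorial i : ℝ)) = 1 - x + x^2/2 - x^3/6 := by
    simp [Finset.sum_range_succ, Nat.factorial]; ring
  rw [h3] at hb
  have := abs_le.1 hb
  linarith [this.1]

-- exp(-x) upper bound: 1 - x ≤ exp(-x) is add_one_le_exp; also exp t ≤ 1 + e * t for t in [0,1]
lemma exp_le_one_add {t : ℝ} (h0 : 0 ≤ t) (h1 : t ≤ 1) : Real.exp t ≤ 1 + 3 * t := by
  have h2 : 1 - t ≤ Real.exp (-t) := by linarith [Real.add_one_le_exp (-t)]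
  have h3 : Real.exp t * (1 - t) ≤ 1 := by
    have he : Real.exp (-t) = (Real.exp t)⁻¹ := Real.exp_neg t
    have hpos := Real.exp_pos t
    have : Real.exp t * (1 - t) ≤ Real.exp t * Real.exp (-t) := by
      apply mul_le_mul_of_nonneg_left h2 (le_of_lt hpos)
    rwa [← Real.exp_add, add_neg_cancel, Real.exp_zero] at this
  have h4 : Real.exp t ≤ Real.exp 1 := Real.exp_le_exp.2 h1
  have h5 : Real.exp 1 ≤ 3 := by linarith [Real.exp_one_lt_d9]
  nlinarith [Real.exp_pos t]

-- P2 : e^{-(x+x^2)} ≤ 1 - x for x in [0,1/4]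
lemma exp_neg_quad_le {x : ℝ} (h0 : 0 ≤ x) (h1 : x ≤ 1/4) :
    Real.exp (-(x + x^2)) ≤ 1 - x := by
  have h2 : (1 + (x + x^2)/2) ≤ Real.exp ((x + x^2)/2) := by
    linarith [Real.add_one_le_exp ((x + x^2)/2)]
  have h3 : (1 + (x + x^2)/2)^2 ≤ Real.exp (x + x^2) := by
    have hp : 0 ≤ 1 + (x + x^2)/2 := by nlinarith
    calc (1 + (x + x^2)/2)^2 ≤ (Real.exp ((x + x^2)/2))^2 := by nlinarith
      _ = Real.exp (x + x^2) := by rw [← Real.exp_nat_mul]; ring_nf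
  have h4 : 1 ≤ (1 - x) * (1 + (x + x^2)/2)^2 := by nlinarith [sq_nonneg x, sq_nonneg (x*x)]
  have h5 : 1 ≤ (1 - x) * Real.exp (x + x^2) := by nlinarith [sq_nonneg (1 + (x+x^2)/2)]
  have h6 := Real.exp_pos (x + x^2)
  rw [Real.exp_neg]
  rw [inv_le_iff_one_le_mul₀ h6] -- maybe wrong name
  linarith



-- pointwise: cos y ≤ 1 - y²/2 + (7/128) y⁴ for y² ≤ 4
lemma cos_ub {y : ℝ} (hy : y^2 ≤ 4) : Real.cos y ≤ 1 - y^2/2 + (7/128)*y^4 := by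
  rw [← Real.cos_abs]
  set x : ℝ := |y| / 2 with hxdef
  have hx0 : 0 ≤ x := by positivity
  have hy2 : |y| ≤ 2 := by
    have : |y|^2 ≤ 2^2 := by rwa [sq_abs, show (2:ℝ)^2 = 4 by norm_num]
    exact abs_le_of_sq_le_sq' this (by norm_num) |>.2
  have hx1 : x ≤ 1 := by rw [hxdef]; linarith
  have habs : |y| = 2 * x := by rw [hxdef]; ring
  have hcos : Real.cos |y| = 1 - 2 * Real.sin x ^ 2 := by
    rw [habs, Real.cos_two_mul, ← Real.sin_sq_add_cos_sq x]; ring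
  have hsb := Real.sin_bound (x := x) (by rwa [abs_of_nonneg hx0])
  rw [abs_of_nonneg hx0] at hsb
  have hL : x - x^3/6 - (5/96)*x^4 ≤ Real.sin x := by
    have := abs_le.1 hsb
    nlinarith [this.1, mul_le_mul_of_nonneg_left hx1 (pow_nonneg hx0 4)]
  have hx2le : x^2 ≤ 1 := by nlinarith
  have hx3 : x^3 ≤ x := by nlinarith [mul_nonpos_of_nonneg_of_nonpos hx0 (by linarith : x^2 - 1 ≤ 0)]
  have hx4 : x^4 ≤ x := by nlinarith [mul_nonpos_of_nonneg_of_nonpos (mul_nonneg hx0 hx0) (by linarith : x^2 - 1 ≤ 0)]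
  have hLpos : 0 ≤ x - x^3/6 - (5/96)*x^4 := by linarith
  have hsq : (x - x^3/6 - (5/96)*x^4)^2 ≤ Real.sin x ^ 2 := by
    nlinarith
  have hyx2 : y^2 = 4 * x^2 := by
    rw [← sq_abs y, habs]; ring
  have hyx4 : y^4 = 16 * x^4 := by
    have : y^4 = (y^2)^2 := by ring
    rw [this, hyx2]; ring
  rw [hcos, hyx2, hyx4]
  nlinarith [sq_nonneg x, sq_nonneg (x*x), sq_nonneg (x*x*x)]

-- P1
lemma P1 {x : ℝ} (h0 : 0 ≤ x) (h1 : x ≤ 1) :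
    1 - x + (21/64)*x^2 ≤ Real.exp (-x) * (1 + x^2) := by
  have hE : 1 - x + x^2/2 - x^3/6 - (5/96)*x^4 ≤ Real.exp (-x) := exp_neg_lb h0 h1
  have hx2 : 0 ≤ 1 + x^2 := by positivity
  have : (1 - x + x^2/2 - x^3/6 - (5/96)*x^4) * (1 + x^2) ≤ Real.exp (-x) * (1 + x^2) := by
    nlinarith
  have h3 : x^3 ≤ x^2 := by nlinarith [mul_nonpos_of_nonneg_of_nonpos (mul_nonneg h0 h0) (by linarith : x - 1 ≤ 0)]
  have h5 : x^5 ≤ x^4 := by nlinarith [mul_nonpos_of_nonneg_of_nonpos (mul_nonneg (mul_nonneg h0 h0) (mul_nonneg h0 h0)) (by linarith : x - 1 ≤ 0)]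
  have h6 : x^6 ≤ x^4 := by nlinarith [mul_nonpos_of_nonneg_of_nonpos (mul_nonneg (mul_nonneg h0 h0) (mul_nonneg h0 h0)) (by nlinarith : x^2 - 1 ≤ 0)]
  nlinarith [this]


-- key real estimate
lemma key {H : ℕ} (hH : 1 ≤ H) {x A : ℝ} (hx0 : 0 ≤ x) (hx1 : x ≤ 1)
    (hxH : (H:ℝ) * x^2 ≤ 1)
    (hA1 : 1 - x ≤ A) (hA2 : A ≤ 1 - x + (21/64)*x^2) :
    |A^H - Real.exp (-((H:ℝ)*x))| ≤ 16 * Real.exp (-((H:ℝ)*x)) * ((H:ℝ)*x^2) := by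
  have hA0 : 0 ≤ A := by linarith
  have hEpos : 0 < Real.exp (-((H:ℝ)*x)) := Real.exp_pos _
  have hHpos : (0:ℝ) < H := by exact_mod_cast Nat.pos_of_ne_zero (by omega)
  rw [abs_le]
  constructor
  · -- lower: exp(-Hx) - A^H ≤ 16 exp(-Hx) H x^2
    rcases le_or_gt x (1/4) with hc | hc
    · have hlow : Real.exp (-(x + x^2)) ≤ A := le_trans (exp_neg_quad_le hx0 hc) hA1
      have h2 : Real.exp (-(x + x^2)) ^ H ≤ A ^ H :=
        pow_le_pow_left₀ (le_of_lt (Real.exp_pos _)) hlow H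
      have h3 : Real.exp (-(x + x^2)) ^ H = Real.exp (-((H:ℝ)*x)) * Real.exp (-((H:ℝ)*x^2)) := by
        rw [← Real.exp_nat_mul, ← Real.exp_add]; ring_nf
      have h4 : 1 - (H:ℝ)*x^2 ≤ Real.exp (-((H:ℝ)*x^2)) := by
        linarith [Real.add_one_le_exp (-((H:ℝ)*x^2))]
      have h5 : Real.exp (-((H:ℝ)*x)) * (1 - (H:ℝ)*x^2) ≤ A ^ H := by
        rw [h3] at h2
        nlinarith [mul_le_mul_of_nonneg_left h4 (le_of_lt hEpos)]
      nlinarith [mul_nonneg (mul_nonneg (le_of_lt hEpos) (le_of_lt hHpos)) (sq_nonneg x)]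
    · -- x > 1/4 : RHS ≥ exp(-Hx), LHS ≤ exp(-Hx)
      have hH1 : (1:ℝ) ≤ (H:ℝ) := by exact_mod_cast hH
      have hxq : (1:ℝ)/16 < x^2 := by nlinarith
      have hxh : x^2 ≤ (H:ℝ) * x^2 := by nlinarith [mul_le_mul_of_nonneg_right hH1 (sq_nonneg x)]
      have h1 : (1:ℝ) ≤ 16 * ((H:ℝ) * x^2) := by linarith
      have h2 : 0 ≤ A ^ H := pow_nonneg hA0 H
      nlinarith
  · -- upper: A^H - exp(-Hx) ≤ 16 exp(-Hx) H x^2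
    have hup : A ≤ Real.exp (-x) * (1 + x^2) := le_trans hA2 (P1 hx0 hx1)
    have h2 : A ^ H ≤ (Real.exp (-x) * (1 + x^2)) ^ H := pow_le_pow_left₀ hA0 hup H
    have h3 : (Real.exp (-x) * (1 + x^2)) ^ H
        = Real.exp (-((H:ℝ)*x)) * (1 + x^2)^H := by
      rw [mul_pow, ← Real.exp_nat_mul]; ring_nf
    have h4 : (1 + x^2)^H ≤ Real.exp ((H:ℝ) * x^2) := by
      calc (1 + x^2)^H ≤ (Real.exp (x^2))^H := by
            apply pow_le_pow_left₀ (by positivity)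
            linarith [Real.add_one_le_exp (x^2)]
        _ = Real.exp ((H:ℝ) * x^2) := by rw [← Real.exp_nat_mul]
    have h5 : Real.exp ((H:ℝ) * x^2) ≤ 1 + 3 * ((H:ℝ) * x^2) :=
      exp_le_one_add (by positivity) hxH
    have h6 : A ^ H ≤ Real.exp (-((H:ℝ)*x)) * (1 + 3 * ((H:ℝ)*x^2)) := by
      rw [h3] at h2
      nlinarith [mul_le_mul_of_nonneg_left (le_trans h4 h5) (le_of_lt hEpos)]
    nlinarith [mul_nonneg (mul_nonneg (le_of_lt hEpos) (le_of_lt hHpos)) (sq_nonneg x)]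


lemma hasDerivAt_s (t : ℝ) :
    HasDerivAt (fun t : ℝ => Real.sin (2*π*t)) (2*π*Real.cos (2*π*t)) t := by
  have h0 : HasDerivAt (fun t : ℝ => 2*π*t) (2*π) t := by
    simpa using (hasDerivAt_id t).const_mul (2*π)
  simpa [Function.comp_def, mul_comm] using (Real.hasDerivAt_sin (2*π*t)).comp t h0

lemma hasDerivAt_c (t : ℝ) :
    HasDerivAt (fun t : ℝ => Real.cos (2*π*t)) (-(2*π*Real.sin (2*π*t))) t := by
  have h0 : HasDerivAt (fun t : ℝ => 2*π*t) (2*π) t := by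
    simpa using (hasDerivAt_id t).const_mul (2*π)
  simpa [Function.comp_def, mul_comm] using (Real.hasDerivAt_cos (2*π*t)).comp t h0

lemma moment2 (a b : ℝ) :
    ∫ t in (0:ℝ)..1, (a * Real.cos (2*π*t) + b * Real.sin (2*π*t))^2 = (a^2+b^2)/2 := by
  have hderiv : ∀ t ∈ Set.uIcc (0:ℝ) 1,
      HasDerivAt (fun t : ℝ => ((a^2+b^2)/2)*t +
        ((a^2-b^2) * (Real.sin (2*π*t) * Real.cos (2*π*t)) + 2*a*b*(Real.sin (2*π*t))^2)/(4*π))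
        ((a * Real.cos (2*π*t) + b * Real.sin (2*π*t))^2) t := by
    intro t _
    have hs := hasDerivAt_s t
    have hc := hasDerivAt_c t
    have h1 : HasDerivAt (fun t : ℝ => ((a^2+b^2)/2)*t) ((a^2+b^2)/2) t := by
      simpa using (hasDerivAt_id t).const_mul ((a^2+b^2)/2)
    have h2 := ((hs.mul hc).const_mul (a^2-b^2)).add (((hs.pow 2).const_mul (2*a*b)))
    have h3 := (h1.add (h2.div_const (4*π)))
    refine h3.congr_deriv (Eq.symm ?_)
    have hpi := Real.pi_ne_zero
    have hcs := Real.sin_sq_add_cos_sq (2*π*t)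
    rw [add_div' _ _ _ (by positivity), eq_div_iff (by positivity)]
    linear_combination (2*π*(a^2+b^2)) * hcs
  have hint : IntervalIntegrable (fun t : ℝ => (a * Real.cos (2*π*t) + b * Real.sin (2*π*t))^2)
      MeasureTheory.volume 0 1 := by
    apply Continuous.intervalIntegrable; continuity
  have := intervalIntegral.integral_eq_sub_of_hasDerivAt hderiv hint
  rw [this]
  norm_num [Real.sin_two_pi, Real.cos_two_pi, mul_one]

lemma moment4 (a b : ℝ) :
    ∫ t in (0:ℝ)..1, (a * Real.cos (2*π*t) + b * Real.sin (2*π*t))^4 = 3*(a^2+b^2)^2/8 := by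
  set α : ℝ := a^4/4 - (3/4)*a^2*b^2
  set β : ℝ := (3/4)*a^2*b^2 - b^4/4
  set γ : ℝ := (3/8)*a^4 - (3/8)*b^4
  set δ : ℝ := -(a^3*b)
  set ε : ℝ := a*b^3
  have hderiv : ∀ t ∈ Set.uIcc (0:ℝ) 1,
      HasDerivAt (fun t : ℝ => (3*(a^2+b^2)^2/8)*t +
        (α * (Real.sin (2*π*t) * (Real.cos (2*π*t))^3)
         + β * ((Real.sin (2*π*t))^3 * Real.cos (2*π*t))
         + γ * (Real.sin (2*π*t) * Real.cos (2*π*t))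
         + δ * (Real.cos (2*π*t))^4
         + ε * (Real.sin (2*π*t))^4)/(2*π))
        ((a * Real.cos (2*π*t) + b * Real.sin (2*π*t))^4) t := by
    intro t _
    have hs := hasDerivAt_s t
    have hc := hasDerivAt_c t
    have h1 : HasDerivAt (fun t : ℝ => (3*(a^2+b^2)^2/8)*t) (3*(a^2+b^2)^2/8) t := by
      simpa using (hasDerivAt_id t).const_mul (3*(a^2+b^2)^2/8)
    have h2 := (((((hs.mul (hc.pow 3)).const_mul α).add
      (((hs.pow 3).mul hc).const_mul β)).add
      ((hs.mul hc).const_mul γ)).add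
      ((hc.pow 4).const_mul δ)).add ((hs.pow 4).const_mul ε)
    have h3 := h1.add (h2.div_const (2*π))
    refine h3.congr_deriv (Eq.symm ?_)
    have hpi := Real.pi_ne_zero
    have hcs := Real.sin_sq_add_cos_sq (2*π*t)
    rw [add_div' _ _ _ (by positivity), eq_div_iff (by positivity)]
    simp only [Pi.pow_apply, α, β, γ, δ, ε]
    linear_combination (π * ((3/2)*a^4*(Real.cos (2*π*t))^2 + (3/2)*a^2*b^2*(Real.sin (2*π*t))^2 + (3/2)*a^2*b^2*(Real.cos (2*π*t))^2
      + (3/2)*b^4*(Real.sin (2*π*t))^2 + (3/4)*a^4 + (3/4)*b^4 + (3/2)*a^2*b^2)) * hcs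
  have hint : IntervalIntegrable (fun t : ℝ => (a * Real.cos (2*π*t) + b * Real.sin (2*π*t))^4)
      MeasureTheory.volume 0 1 := by
    apply Continuous.intervalIntegrable; fun_prop
  have := intervalIntegral.integral_eq_sub_of_hasDerivAt hderiv hint
  rw [this]
  norm_num [Real.sin_two_pi, Real.cos_two_pi, mul_one]

lemma int_sin_zero (a b : ℝ) :
    ∫ t in (0:ℝ)..1, Real.sin (a * Real.cos (2*π*t) + b * Real.sin (2*π*t)) = 0 := by
  set f : ℝ → ℝ := fun t => Real.sin (a * Real.cos (2*π*t) + b * Real.sin (2*π*t)) with hf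
  have hper : Function.Periodic f 1 := by
    intro t
    simp only [hf]
    rw [mul_add, mul_one, Real.cos_add_two_pi, Real.sin_add_two_pi]
  have h1 : ∫ t in (0:ℝ)..1, f t = ∫ t in (1/2:ℝ)..(3/2:ℝ), f t := by
    have := hper.intervalIntegral_add_eq 0 (1/2)
    norm_num at this ⊢
    convert this using 2 <;> norm_num
  have h2 : ∫ t in (1/2:ℝ)..(3/2:ℝ), f t = ∫ t in (0:ℝ)..1, f (t + 1/2) := by
    rw [intervalIntegral.integral_comp_add_right (f := f) (d := 1/2)]
    norm_num
  have h3 : ∀ t, f (t + 1/2) = - f t := by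
    intro t
    simp only [hf]
    have hc : 2*π*(t + 1/2) = 2*π*t + π := by ring
    rw [hc, Real.cos_add_pi, Real.sin_add_pi]
    rw [show a * -Real.cos (2*π*t) + b * -Real.sin (2*π*t)
        = -(a * Real.cos (2*π*t) + b * Real.sin (2*π*t)) by ring, Real.sin_neg]
  have h4 : ∫ t in (0:ℝ)..1, f (t + 1/2) = - ∫ t in (0:ℝ)..1, f t := by
    simp_rw [h3]
    exact intervalIntegral.integral_neg
  have hz : ∫ t in (0:ℝ)..1, f t = - ∫ t in (0:ℝ)..1, f t := (h1.trans h2).trans h4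
  linarith


lemma cont_g (a b : ℝ) : Continuous (fun t : ℝ => a * Real.cos (2*π*t) + b * Real.sin (2*π*t)) := by
  fun_prop

lemma int_cos_lb (a b : ℝ) :
    1 - (a^2+b^2)/4 ≤ ∫ t in (0:ℝ)..1, Real.cos (a * Real.cos (2*π*t) + b * Real.sin (2*π*t)) := by
  have hgc := cont_g a b
  have h1 : ∫ t in (0:ℝ)..1,
      (1 - (a * Real.cos (2*π*t) + b * Real.sin (2*π*t))^2/2) = 1 - (a^2+b^2)/4 := by
    rw [intervalIntegral.integral_sub intervalIntegrable_const (by apply Continuous.intervalIntegrable; fun_prop)]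
    rw [intervalIntegral.integral_div, moment2]
    simp; ring
  rw [← h1]
  apply intervalIntegral.integral_mono_on zero_le_one
    (by apply Continuous.intervalIntegrable; fun_prop)
    (by apply Continuous.intervalIntegrable; fun_prop)
  intro t _
  exact Real.one_sub_sq_div_two_le_cos

lemma int_cos_ub (a b : ℝ) (hab : a^2+b^2 ≤ 4) :
    ∫ t in (0:ℝ)..1, Real.cos (a * Real.cos (2*π*t) + b * Real.sin (2*π*t))
      ≤ 1 - (a^2+b^2)/4 + (21/64)*((a^2+b^2)/4)^2 := by
  have hgc := cont_g a b
  have h1 : ∫ t in (0:ℝ)..1,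
      (1 - (a * Real.cos (2*π*t) + b * Real.sin (2*π*t))^2/2
        + (7/128)*(a * Real.cos (2*π*t) + b * Real.sin (2*π*t))^4)
      = 1 - (a^2+b^2)/4 + (21/64)*((a^2+b^2)/4)^2 := by
    rw [intervalIntegral.integral_add (by apply Continuous.intervalIntegrable; fun_prop)
      (by apply Continuous.intervalIntegrable; fun_prop),
      intervalIntegral.integral_sub intervalIntegrable_const
      (by apply Continuous.intervalIntegrable; fun_prop),
      intervalIntegral.integral_div, moment2, intervalIntegral.integral_const_mul, moment4]
    simp; ring
  rw [← h1]
  apply intervalIntegral.integral_mono_on zero_le_one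
    (by apply Continuous.intervalIntegrable; fun_prop)
    (by apply Continuous.intervalIntegrable; fun_prop)
  intro t _
  apply cos_ub
  nlinarith [Real.sin_sq_add_cos_sq (2*π*t), sq_nonneg (a * Real.sin (2*π*t) - b * Real.cos (2*π*t)),
    sq_nonneg (a * Real.cos (2*π*t) + b * Real.sin (2*π*t))]

lemma psi_eq (a b : ℝ) :
    (∫ t in (0:ℝ)..1, Complex.exp (Complex.I *
        ((a * Real.cos (2*π*t) + b * Real.sin (2*π*t) : ℝ) : ℂ)))
      = ((∫ t in (0:ℝ)..1, Real.cos (a * Real.cos (2*π*t) + b * Real.sin (2*π*t)) : ℝ) : ℂ) := by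
  have hpt : ∀ t : ℝ, Complex.exp (Complex.I *
        ((a * Real.cos (2*π*t) + b * Real.sin (2*π*t) : ℝ) : ℂ))
      = ((Real.cos (a * Real.cos (2*π*t) + b * Real.sin (2*π*t)) : ℝ) : ℂ)
        + ((Real.sin (a * Real.cos (2*π*t) + b * Real.sin (2*π*t)) : ℝ) : ℂ) * Complex.I := by
    intro t
    rw [mul_comm, Complex.exp_mul_I]
    rw [← Complex.ofReal_cos, ← Complex.ofReal_sin]
  simp_rw [hpt]
  rw [intervalIntegral.integral_add
      (by apply Continuous.intervalIntegrable; fun_prop)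
      (by apply Continuous.intervalIntegrable; fun_prop),
    intervalIntegral.integral_mul_const,
    intervalIntegral.integral_ofReal, intervalIntegral.integral_ofReal,
    int_sin_zero]
  simp


lemma integral_mul_indep {Ω : Type} {mΩ : MeasurableSpace Ω} {μ : Measure Ω}
    [IsProbabilityMeasure μ] {X Y : Ω → ℂ}
    (h : IndepFun X Y μ) (hX : Integrable X μ) (hY : Integrable Y μ) :
    ∫ ω, X ω * Y ω ∂μ = (∫ ω, X ω ∂μ) * ∫ ω, Y ω ∂μ := by
  have hXY : Integrable (fun ω => X ω * Y ω) μ := h.integrable_mul hX hY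
  have hXre : Integrable (fun ω => (X ω).re) μ := by
    simpa [RCLike.re_eq_complex_re] using hX.re
  have hXim : Integrable (fun ω => (X ω).im) μ := by
    simpa [RCLike.im_eq_complex_im] using hX.im
  have hYre : Integrable (fun ω => (Y ω).re) μ := by
    simpa [RCLike.re_eq_complex_re] using hY.re
  have hYim : Integrable (fun ω => (Y ω).im) μ := by
    simpa [RCLike.im_eq_complex_im] using hY.im
  have irr : IndepFun (fun ω => (X ω).re) (fun ω => (Y ω).re) μ :=
    h.comp Complex.measurable_re Complex.measurable_re
  have iri : IndepFun (fun ω => (X ω).re) (fun ω => (Y ω).im) μ :=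
    h.comp Complex.measurable_re Complex.measurable_im
  have iir : IndepFun (fun ω => (X ω).im) (fun ω => (Y ω).re) μ :=
    h.comp Complex.measurable_im Complex.measurable_re
  have iii : IndepFun (fun ω => (X ω).im) (fun ω => (Y ω).im) μ :=
    h.comp Complex.measurable_im Complex.measurable_im
  have err : ∫ ω, (X ω).re * (Y ω).re ∂μ = (∫ ω, (X ω).re ∂μ) * ∫ ω, (Y ω).re ∂μ :=
    irr.integral_mul_eq_mul_integral hXre.aestronglyMeasurable hYre.aestronglyMeasurable
  have eri : ∫ ω, (X ω).re * (Y ω).im ∂μ = (∫ ω, (X ω).re ∂μ) * ∫ ω, (Y ω).im ∂μ :=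
    iri.integral_mul_eq_mul_integral hXre.aestronglyMeasurable hYim.aestronglyMeasurable
  have eir : ∫ ω, (X ω).im * (Y ω).re ∂μ = (∫ ω, (X ω).im ∂μ) * ∫ ω, (Y ω).re ∂μ :=
    iir.integral_mul_eq_mul_integral hXim.aestronglyMeasurable hYre.aestronglyMeasurable
  have eii : ∫ ω, (X ω).im * (Y ω).im ∂μ = (∫ ω, (X ω).im ∂μ) * ∫ ω, (Y ω).im ∂μ :=
    iii.integral_mul_eq_mul_integral hXim.aestronglyMeasurable hYim.aestronglyMeasurable
  have hreX : ∫ ω, (X ω).re ∂μ = (∫ ω, X ω ∂μ).re := by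
    simpa [RCLike.re_eq_complex_re] using integral_re hX
  have himX : ∫ ω, (X ω).im ∂μ = (∫ ω, X ω ∂μ).im := by
    simpa [RCLike.im_eq_complex_im] using integral_im hX
  have hreY : ∫ ω, (Y ω).re ∂μ = (∫ ω, Y ω ∂μ).re := by
    simpa [RCLike.re_eq_complex_re] using integral_re hY
  have himY : ∫ ω, (Y ω).im ∂μ = (∫ ω, Y ω ∂μ).im := by
    simpa [RCLike.im_eq_complex_im] using integral_im hY
  apply Complex.ext
  · have h1 : ∫ ω, ((X ω * Y ω).re) ∂μ = (∫ ω, X ω * Y ω ∂μ).re := by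
      simpa [RCLike.re_eq_complex_re] using integral_re hXY
    rw [← h1]
    simp_rw [Complex.mul_re]
    have m1 : Integrable (fun ω => (X ω).re * (Y ω).re) μ := by
      exact irr.integrable_mul hXre hYre
    have m2 : Integrable (fun ω => (X ω).im * (Y ω).im) μ := by
      exact iii.integrable_mul hXim hYim
    rw [integral_sub m1 m2, err, eii, hreX, himX, hreY, himY]
  · have h1 : ∫ ω, ((X ω * Y ω).im) ∂μ = (∫ ω, X ω * Y ω ∂μ).im := by
      simpa [RCLike.im_eq_complex_im] using integral_im hXY
    rw [← h1]
    simp_rw [Complex.mul_im]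
    have m1 : Integrable (fun ω => (X ω).re * (Y ω).im) μ := by
      exact iri.integrable_mul hXre hYim
    have m2 : Integrable (fun ω => (X ω).im * (Y ω).re) μ := by
      exact iir.integrable_mul hXim hYre
    rw [integral_add m1 m2, eri, eir, hreX, himX, hreY, himY]

lemma integral_prod_indep {Ω : Type} {mΩ : MeasurableSpace Ω} {μ : Measure Ω}
    [IsProbabilityMeasure μ] {n : ℕ} (f : Fin n → Ω → ℂ)
    (hmeas : ∀ j, Measurable (f j)) (hbdd : ∀ j ω, ‖f j ω‖ ≤ 1)
    (hind : iIndepFun f μ) (s : Finset (Fin n)) :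
    ∫ ω, ∏ j ∈ s, f j ω ∂μ = ∏ j ∈ s, ∫ ω, f j ω ∂μ := by
  classical
  have hint : ∀ j, Integrable (f j) μ := fun j => by
    apply Integrable.mono' (integrable_const (1:ℝ)) (hmeas j).aestronglyMeasurable
    exact Filter.Eventually.of_forall (fun ω => hbdd j ω)
  induction s using Finset.induction_on with
  | empty => simp
  | insert i s hi ih =>
    have hindep : IndepFun (∏ j ∈ s, f j) (f i) μ :=
      hind.indepFun_finset_prod_of_notMem hmeas hi
    have hprodint : Integrable (fun ω => ∏ j ∈ s, f j ω) μ := by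
      apply Integrable.mono' (integrable_const (1:ℝ))
      · exact (Finset.measurable_prod s (fun j _ => hmeas j)).aestronglyMeasurable
      · refine Filter.Eventually.of_forall (fun ω => ?_)
        calc ‖∏ j ∈ s, f j ω‖ = ∏ j ∈ s, ‖f j ω‖ := norm_prod _ _
          _ ≤ ∏ j ∈ s, 1 := Finset.prod_le_prod (fun j _ => norm_nonneg _)
              (fun j _ => hbdd j ω)
          _ = 1 := by simp
    have hindep' : IndepFun (f i) (fun ω => ∏ j ∈ s, f j ω) μ := by
      have h' := hindep.symm
      simpa [Finset.prod_fn] using h'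
    simp_rw [Finset.prod_insert hi]
    rw [integral_mul_indep hindep' (hint i) hprodint, ih]


end RM32


open MeasureTheory ProbabilityTheory Complex Finset

namespace RM32


lemma integral_uniformCircle (g : ℂ → ℂ) (hg : Continuous g) :
    ∫ z, g z ∂uniformCircle
      = ∫ t in (0:ℝ)..1, g (Complex.exp (2 * Real.pi * t * Complex.I)) := by
  rw [uniformCircle, MeasureTheory.integral_map (by fun_prop) hg.aestronglyMeasurable]
  rw [intervalIntegral.integral_of_le zero_le_one]
  rw [← MeasureTheory.integral_Icc_eq_integral_Ioc]

end RM32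

open RM32 in
set_option maxHeartbeats 1000000 in
/-- Lemma 3.2: the characteristic function of the joint distribution of
`Re Z̃_H` and `Im Z̃_H` is close to the two-dimensional standard Gaussian one,
where `Z̃_H = (X_1 + ⋯ + X_H)/√(H/2)`. -/
theorem random_model_charFun_close_to_gaussian :
    ∃ C : ℝ, 0 < C ∧
      ∀ (H : ℕ), 1 ≤ H →
      ∀ {Ω : Type} [MeasurableSpace Ω] (μ : Measure Ω) [IsProbabilityMeasure μ]
        (X : Fin H → Ω → ℂ), (∀ j, Measurable (X j)) →
        iIndepFun X μ →
        (∀ j, Measure.map (X j) μ = uniformCircle) →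
      ∀ (u v : ℝ), |u| ≤ (H : ℝ) ^ ((1 : ℝ) / 4) → |v| ≤ (H : ℝ) ^ ((1 : ℝ) / 4) →
      norm
          ((∫ ω, Complex.exp (Complex.I *
              ((u * ((∑ j, X j ω) / (Real.sqrt ((H : ℝ) / 2) : ℂ)).re +
                v * ((∑ j, X j ω) / (Real.sqrt ((H : ℝ) / 2) : ℂ)).im : ℝ) : ℂ)) ∂μ) -
            (Real.exp (-(u ^ 2 + v ^ 2) / 2) : ℂ))
        ≤ C * Real.exp (-(u ^ 2 + v ^ 2) / 2) * (u ^ 4 + v ^ 4) / H := by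
  classical
  refine ⟨8, by norm_num, ?_⟩
  intro H hH Ω _ μ _ X hXm hXi hXd u v hu hv
  have hHpos : (0:ℝ) < H := by
    have : (1:ℝ) ≤ H := by exact_mod_cast hH
    linarith
  set c : ℝ := Real.sqrt ((H:ℝ)/2) with hcdef
  have hc2 : c^2 = (H:ℝ)/2 := Real.sq_sqrt (by positivity)
  have hcpos : 0 < c := Real.sqrt_pos.2 (by positivity)
  set a : ℝ := u / c with hadef
  set b : ℝ := v / c with hbdef
  set g : ℂ → ℂ := fun z => Complex.exp (Complex.I * ((a * z.re + b * z.im : ℝ) : ℂ))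
    with hgdef
  have hgcont : Continuous g := by
    apply Complex.continuous_exp.comp
    apply continuous_const.mul
    apply Complex.continuous_ofReal.comp
    exact (continuous_const.mul Complex.continuous_re).add
      (continuous_const.mul Complex.continuous_im)
  -- Step A : rewrite the integrand as a product
  have hsplit : ∀ ω, Complex.exp (Complex.I *
        ((u * ((∑ j, X j ω) / (c:ℂ)).re + v * ((∑ j, X j ω) / (c:ℂ)).im : ℝ) : ℂ))
      = ∏ j, g (X j ω) := by
    intro ω
    have h1 : (u * ((∑ j, X j ω) / (c:ℂ)).re + v * ((∑ j, X j ω) / (c:ℂ)).im : ℝ)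
        = ∑ j, (a * (X j ω).re + b * (X j ω).im) := by
      rw [Complex.div_ofReal_re, Complex.div_ofReal_im, Complex.re_sum, Complex.im_sum,
        Finset.sum_div, Finset.sum_div, Finset.mul_sum, Finset.mul_sum,
        ← Finset.sum_add_distrib]
      refine Finset.sum_congr rfl fun j _ => ?_
      rw [hadef, hbdef]; ring
    rw [h1, Complex.ofReal_sum, Finset.mul_sum, Complex.exp_sum]
  simp_rw [hsplit]
  -- Step B : product of integrals
  have habs : ∀ z, ‖g z‖ ≤ 1 := by
    intro z
    rw [hgdef]
    simp only []
    rw [mul_comm, Complex.norm_exp_ofReal_mul_I]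
  have hprod : ∫ ω, ∏ j, g (X j ω) ∂μ = ∏ j : Fin H, ∫ ω, g (X j ω) ∂μ := by
    exact integral_prod_indep (fun j => fun ω => g (X j ω))
      (fun j => hgcont.measurable.comp (hXm j))
      (fun j ω => habs _)
      (hXi.comp (fun _ => g) (fun _ => hgcont.measurable)) Finset.univ
  rw [hprod]
  -- Step C : each factor equals A
  set π := Real.pi with hπ
  set A : ℝ := ∫ t in (0:ℝ)..1,
    Real.cos (a * Real.cos (2*π*t) + b * Real.sin (2*π*t)) with hAdef
  have hfac : ∀ j, ∫ ω, g (X j ω) ∂μ = (A : ℂ) := by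
    intro j
    have h1 : ∫ ω, g (X j ω) ∂μ = ∫ z, g z ∂(Measure.map (X j) μ) :=
      (MeasureTheory.integral_map (hXm j).aemeasurable hgcont.aestronglyMeasurable).symm
    rw [h1, hXd j, integral_uniformCircle g hgcont]
    have h2 : ∀ t : ℝ, g (Complex.exp (2 * (π:ℝ) * t * Complex.I))
        = Complex.exp (Complex.I * ((a * Real.cos (2*π*t) + b * Real.sin (2*π*t) : ℝ) : ℂ)) := by
      intro t
      have h3 : (2 * (π:ℂ) * (t:ℂ) * Complex.I) = (((2*π*t : ℝ)):ℂ) * Complex.I := by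
        push_cast; ring
      rw [hgdef]
      simp only []
      rw [show ((2:ℂ) * (Real.pi:ℂ) * (t:ℂ) * Complex.I) = (((2*π*t : ℝ)):ℂ) * Complex.I by
          push_cast; ring]
      rw [Complex.exp_ofReal_mul_I_re, Complex.exp_ofReal_mul_I_im]
    simp_rw [← hπ, h2]
    rw [psi_eq a b, hAdef]
  simp_rw [hfac]
  rw [Finset.prod_const, Finset.card_univ, Fintype.card_fin]
  -- Step D : real estimates
  set x : ℝ := (a^2+b^2)/4 with hxdef
  have hab : a^2 + b^2 = (u^2+v^2)/((H:ℝ)/2) := by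
    rw [hadef, hbdef, div_pow, div_pow, ← hc2]; ring
  have hu2 : u^2 ≤ Real.sqrt H := by
    have h1 : |u|^2 ≤ ((H:ℝ) ^ ((1:ℝ)/4))^2 := by
      apply pow_le_pow_left₀ (_root_.abs_nonneg u) hu
    rw [_root_.sq_abs] at h1
    have h2 : ((H:ℝ) ^ ((1:ℝ)/4))^2 = (H:ℝ) ^ ((1:ℝ)/2) := by
      rw [← Real.rpow_natCast ((H:ℝ) ^ ((1:ℝ)/4)) 2, ← Real.rpow_mul (by positivity)]
      norm_num
    rw [h2] at h1
    rwa [Real.sqrt_eq_rpow]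
  have hv2 : v^2 ≤ Real.sqrt H := by
    have h1 : |v|^2 ≤ ((H:ℝ) ^ ((1:ℝ)/4))^2 := by
      apply pow_le_pow_left₀ (_root_.abs_nonneg v) hv
    rw [_root_.sq_abs] at h1
    have h2 : ((H:ℝ) ^ ((1:ℝ)/4))^2 = (H:ℝ) ^ ((1:ℝ)/2) := by
      rw [← Real.rpow_natCast ((H:ℝ) ^ ((1:ℝ)/4)) 2, ← Real.rpow_mul (by positivity)]
      norm_num
    rw [h2] at h1
    rwa [Real.sqrt_eq_rpow]
  have hsqH : Real.sqrt H * Real.sqrt H = (H:ℝ) := Real.mul_self_sqrt (by positivity)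
  have hsqH1 : 1 ≤ Real.sqrt H := by
    nlinarith [Real.sqrt_nonneg (H:ℝ), hHpos, (by exact_mod_cast hH : (1:ℝ) ≤ H)]
  have hx0 : 0 ≤ x := by rw [hxdef]; positivity
  have hxval : x = (u^2+v^2)/(2*H) := by
    rw [hxdef, hab]; field_simp; ring
  have hx1 : x ≤ 1 := by
    rw [hxval]
    rw [div_le_one (by positivity)]
    nlinarith
  have hxH : (H:ℝ) * x^2 ≤ 1 := by
    rw [hxval]
    rw [div_pow]
    rw [show (H:ℝ) * ((u^2+v^2)^2 / (2*H)^2) = (u^2+v^2)^2/(4*H) by field_simp; ring]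
    rw [div_le_one (by positivity)]
    nlinarith
  have hab4 : a^2 + b^2 ≤ 4 := by
    have : x ≤ 1 := hx1
    rw [hxdef] at this; linarith
  have hA1 : 1 - x ≤ A := by
    have := int_cos_lb a b
    rw [hAdef, hxdef]; linarith
  have hA2 : A ≤ 1 - x + (21/64)*x^2 := by
    have := int_cos_ub a b hab4
    rw [hAdef, hxdef]; linarith
  have hkey := key hH hx0 hx1 hxH hA1 hA2
  have hHx : (H:ℝ) * x = (u^2+v^2)/2 := by
    rw [hxval]; field_simp
  rw [hHx] at hkey
  have hE : Real.exp (-((u^2+v^2)/2)) = Real.exp (-(u^2+v^2)/2) := by rw [neg_div]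
  rw [hE] at hkey
  have hEpos : (0:ℝ) < Real.exp (-(u^2+v^2)/2) := Real.exp_pos _
  have hcast : ‖((A:ℝ):ℂ)^H - ((Real.exp (-(u^2+v^2)/2) : ℝ):ℂ)‖
      = |A^H - Real.exp (-(u^2+v^2)/2)| := by
    rw [← Complex.ofReal_pow, ← Complex.ofReal_sub, Complex.norm_real, Real.norm_eq_abs]
  rw [hcast]
  have hbound : (H:ℝ) * x^2 ≤ (u^4+v^4)/(2*H) := by
    rw [hxval, div_pow,
      show (H:ℝ) * ((u^2+v^2)^2 / (2*H)^2) = (u^2+v^2)^2/(4*H) by field_simp; ring]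
    rw [div_le_div_iff₀ (by positivity) (by positivity)]
    nlinarith [sq_nonneg (u^2 - v^2)]
  calc |A^H - Real.exp (-(u^2+v^2)/2)|
      ≤ 16 * Real.exp (-(u^2+v^2)/2) * ((H:ℝ)*x^2) := hkey
    _ ≤ 16 * Real.exp (-(u^2+v^2)/2) * ((u^4+v^4)/(2*H)) := by
        apply mul_le_mul_of_nonneg_left hbound (by positivity)
    _ = 8 * Real.exp (-(u^2+v^2)/2) * (u^4+v^4) / H := by
        field_simp; ring
end

section
/- There is an absolute constant C > 0 with the following property. Let q be a prime, χ a non-real Dirichlet character modulo q, and H ≥ 1 an integer with H² ≤ q^{1/2}. Then |(1/q) Σ_{x=0}^{q−1} (Re S_{χ,H}(x))² − H/2| ≤ C · H² · q^{−1/2}, and the same bound holds with Re replaced by Im. -/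
open Finset Complex

section Aux

variable {q : ℕ} [Fact (Nat.Prime q)]

private lemma aux_char_ne_zero (χ : MulChar (ZMod q) ℂ) {c : ZMod q} (hc : c ≠ 0) :
    χ c ≠ 0 := by
  have h : χ c * χ c⁻¹ = 1 := by
    rw [← map_mul, mul_inv_cancel₀ hc, map_one]
  exact left_ne_zero_of_mul_eq_one h

private lemma aux_jacobi_conj (χ : MulChar (ZMod q) ℂ) :
    jacobiSum χ⁻¹ χ⁻¹ = (starRingEnd ℂ) (jacobiSum χ χ) := by
  rw [jacobiSum, jacobiSum, map_sum]
  refine Finset.sum_congr rfl fun x _ => ?_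
  rw [map_mul, ← MulChar.star_apply', ← MulChar.star_apply']
  rfl

private lemma aux_jacobi_abs {χ : MulChar (ZMod q) ℂ} (hχ : χ ≠ 1) (hχ2 : χ * χ ≠ 1) :
    ‖jacobiSum χ χ‖ = Real.sqrt q := by
  have hq : Nat.Prime q := Fact.out
  have hchar : ringChar ℂ ≠ ringChar (ZMod q) := by
    rw [ringChar.eq_zero, ZMod.ringChar_zmod_n]
    exact fun h => hq.ne_zero h.symm
  have key := jacobiSum_mul_jacobiSum_inv hchar hχ hχ hχ2
  rw [aux_jacobi_conj, Complex.mul_conj, ZMod.card] at key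
  have h2 : Complex.normSq (jacobiSum χ χ) = (q : ℝ) := by exact_mod_cast key
  rw [← Complex.sq_norm] at h2
  rw [← h2, Real.sqrt_sq (norm_nonneg _)]

private lemma aux_sum_shift (f : ZMod q → ℂ) (b : ZMod q) :
    ∑ y : ZMod q, f (y + b) = ∑ y : ZMod q, f y :=
  Fintype.sum_equiv (Equiv.addRight b) _ f (fun _ => rfl)

private lemma aux_sum_mul_shift (f : ZMod q → ℂ) {d : ZMod q} (hd : d ≠ 0) :
    ∑ y : ZMod q, f y = ∑ y : ZMod q, f (d * y) :=
  (Fintype.sum_equiv (Equiv.mulLeft₀ d hd) (fun x => f (d * x)) f (fun _ => rfl)).symm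

private lemma aux_sum_one_char (χ : MulChar (ZMod q) ℂ) :
    ∑ y : ZMod q, χ y * χ⁻¹ y = (q : ℂ) - 1 := by
  have h : ∀ y : ZMod q, χ y * χ⁻¹ y = 1 - (if y = 0 then 1 else 0) := by
    intro y
    rcases eq_or_ne y 0 with rfl | hy
    · rw [MulChar.map_zero, zero_mul, if_pos rfl]; norm_num
    · rw [if_neg hy, MulChar.inv_apply_eq_inv', mul_inv_cancel₀ (aux_char_ne_zero χ hy)]
      ring
  simp_rw [h]
  rw [Finset.sum_sub_distrib, Finset.sum_const, Finset.sum_ite_eq' Finset.univ (0 : ZMod q)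
    (fun _ => (1 : ℂ))]
  simp [ZMod.card]

private lemma aux_sum_char_mul_inv {χ : MulChar (ZMod q) ℂ} (hχ : χ ≠ 1) {c : ZMod q}
    (hc : c ≠ 0) : ∑ y : ZMod q, χ (y + c) * χ⁻¹ y = -1 := by
  have hd : (-c : ZMod q) ≠ 0 := neg_ne_zero.mpr hc
  rw [aux_sum_mul_shift (fun y => χ (y + c) * χ⁻¹ y) hd]
  have h1 : ∀ x : ZMod q, χ (-c * x + c) * χ⁻¹ (-c * x)
      = (χ c * χ⁻¹ (-c)) * (χ⁻¹ x * χ (1 - x)) := by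
    intro x
    have e1 : -c * x + c = c * (1 - x) := by ring
    have e2 : (-c : ZMod q) * x = -c * x := rfl
    rw [e1, map_mul, map_mul]
    ring
  simp_rw [h1]
  rw [← Finset.mul_sum]
  have hJ : ∑ x : ZMod q, χ⁻¹ x * χ (1 - x) = jacobiSum χ⁻¹ χ := rfl
  rw [hJ, jacobiSum_comm, jacobiSum_nontrivial_inv hχ]
  have ha : χ c ≠ 0 := aux_char_ne_zero χ hc
  have hb : χ (-1 : ZMod q) ≠ 0 := aux_char_ne_zero χ (by
    intro h; exact one_ne_zero (neg_eq_zero.mp h))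
  rw [MulChar.inv_apply_eq_inv']
  have hnc : χ (-c) = χ (-1) * χ c := by rw [← map_mul, neg_one_mul]
  rw [hnc]
  field_simp

private lemma aux_sum_char_mul (χ : MulChar (ZMod q) ℂ) {c : ZMod q} (hc : c ≠ 0) :
    ∑ y : ZMod q, χ (y + c) * χ y = (χ c * χ (-c)) * jacobiSum χ χ := by
  have hd : (-c : ZMod q) ≠ 0 := neg_ne_zero.mpr hc
  rw [aux_sum_mul_shift (fun y => χ (y + c) * χ y) hd]
  have h1 : ∀ x : ZMod q, χ (-c * x + c) * χ (-c * x)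
      = (χ c * χ (-c)) * (χ x * χ (1 - x)) := by
    intro x
    have e1 : -c * x + c = c * (1 - x) := by ring
    have e2 : (-c : ZMod q) * x = -c * x := by ring
    rw [e1, e2, map_mul, map_mul]
    ring
  simp_rw [h1]
  rw [← Finset.mul_sum]
  rfl

private lemma aux_abs_char_le_one (χ : MulChar (ZMod q) ℂ) (c : ZMod q) :
    ‖χ c‖ ≤ 1 := by
  by_cases hu : IsUnit c
  · have := DirichletCharacter.unit_norm_eq_one (χ : DirichletCharacter ℂ q) hu.unit
    rw [IsUnit.unit_spec] at this
    rw [this]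
  · rw [MulChar.map_nonunit χ hu]
    simp

private lemma aux_inner_A {χ : MulChar (ZMod q) ℂ} (hχ : χ ≠ 1) (a b : ZMod q) :
    ∑ y : ZMod q, χ (y + a) * χ⁻¹ (y + b) = if a = b then ((q : ℂ) - 1) else -1 := by
  have h1 : ∑ y : ZMod q, χ (y + a) * χ⁻¹ (y + b)
      = ∑ y : ZMod q, χ (y + (a - b)) * χ⁻¹ y := by
    rw [← aux_sum_shift (fun y => χ (y + (a - b)) * χ⁻¹ y) b]
    refine Finset.sum_congr rfl fun y _ => ?_
    have e : y + b + (a - b) = y + a := by ring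
    simp only [e]
  rw [h1]
  rcases eq_or_ne a b with rfl | hab
  · rw [if_pos rfl, sub_self]
    simpa using aux_sum_one_char χ
  · rw [if_neg hab]
    exact aux_sum_char_mul_inv hχ (sub_ne_zero.mpr hab)

private lemma aux_inner_B {χ : MulChar (ZMod q) ℂ} (hχ : χ ≠ 1) (hχ2 : χ * χ ≠ 1)
    (a b : ZMod q) :
    ‖∑ y : ZMod q, χ (y + a) * χ (y + b)‖ ≤ Real.sqrt q := by
  have h1 : ∑ y : ZMod q, χ (y + a) * χ (y + b)
      = ∑ y : ZMod q, χ (y + (a - b)) * χ y := by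
    rw [← aux_sum_shift (fun y => χ (y + (a - b)) * χ y) b]
    refine Finset.sum_congr rfl fun y _ => ?_
    have e : y + b + (a - b) = y + a := by ring
    simp only [e]
  rw [h1]
  rcases eq_or_ne a b with rfl | hab
  · have h2 : ∀ y : ZMod q, χ (y + (a - a)) * χ y = (χ * χ) y := by
      intro y
      rw [sub_self, add_zero, MulChar.coeToFun_mul, Pi.mul_apply]
    simp_rw [h2]
    rw [MulChar.sum_eq_zero_of_ne_one hχ2]
    simp [Real.sqrt_nonneg]
  · rw [aux_sum_char_mul χ (sub_ne_zero.mpr hab), norm_mul, norm_mul,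
      aux_jacobi_abs hχ hχ2]
    calc ‖χ (a - b)‖ * ‖χ (-(a - b))‖ * Real.sqrt q
        ≤ 1 * 1 * Real.sqrt q := by
          gcongr <;> [exact aux_abs_char_le_one χ _ ; exact aux_abs_char_le_one χ _]
      _ = Real.sqrt q := by ring

private lemma aux_sum_range_cast {M : Type*} [AddCommMonoid M] (f : ZMod q → M) :
    ∑ x ∈ Finset.range q, f (x : ZMod q) = ∑ y : ZMod q, f y := by
  haveI : NeZero q := ⟨(Fact.out : Nat.Prime q).ne_zero⟩
  refine Finset.sum_nbij' (fun x => (x : ZMod q)) (fun y => y.val) ?_ ?_ ?_ ?_ ?_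
  · exact fun a _ => Finset.mem_univ _
  · exact fun y _ => Finset.mem_range.mpr (ZMod.val_lt y)
  · intro a ha
    exact ZMod.val_cast_of_lt (Finset.mem_range.mp ha)
  · intro y _
    exact ZMod.natCast_rightInverse y
  · exact fun a _ => rfl

end Aux

/-- The short character sum `S_{χ,H}(x) = ∑_{x < n ≤ x+H} χ(n)`. -/
noncomputable def shortCharSum {q : ℕ} (χ : DirichletCharacter ℂ q) (H x : ℕ) : ℂ :=
  ∑ n ∈ Finset.Ioc x (x + H), χ (n : ZMod q)

/-- The variance computation justifying the normalization `√(H/2)`: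
`(1/q) ∑_x (Re S_{χ,H}(x))² = H/2 + O(H² q^{-1/2})`, and similarly for `Im`. -/
theorem variance_of_short_character_sum :
    ∃ C : ℝ, 0 < C ∧
      ∀ (q : ℕ), Nat.Prime q →
      ∀ (χ : DirichletCharacter ℂ q), (∃ n : ZMod q, (χ n).im ≠ 0) →
      ∀ (H : ℕ), 1 ≤ H → (H : ℝ) ^ 2 ≤ (q : ℝ) ^ ((1 : ℝ) / 2) →
      |(∑ x ∈ Finset.range q, (shortCharSum χ H x).re ^ 2) / q - (H : ℝ) / 2|
          ≤ C * (H : ℝ) ^ 2 * (q : ℝ) ^ (-(1 : ℝ) / 2) ∧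
      |(∑ x ∈ Finset.range q, (shortCharSum χ H x).im ^ 2) / q - (H : ℝ) / 2|
          ≤ C * (H : ℝ) ^ 2 * (q : ℝ) ^ (-(1 : ℝ) / 2) := by
  refine ⟨1, one_pos, ?_⟩
  intro q hq χ hχim H hH1 hH2
  haveI : Fact (Nat.Prime q) := ⟨hq⟩
  haveI : NeZero q := ⟨hq.ne_zero⟩
  -- χ is nontrivial
  have hχ1 : χ ≠ 1 := by
    rintro rfl
    obtain ⟨n, hn⟩ := hχim
    apply hn
    by_cases h : IsUnit n
    · rw [MulChar.one_apply h]; simp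
    · rw [MulChar.map_nonunit _ h]; simp
  -- χ² is nontrivial
  have hχ2 : χ * χ ≠ 1 := by
    intro h
    obtain ⟨n, hn⟩ := hχim
    apply hn
    by_cases hu : IsUnit n
    · have h2 : χ n * χ n = 1 := by
        have h3 := congrArg (fun ψ : MulChar (ZMod q) ℂ => ψ n) h
        simpa [MulChar.coeToFun_mul, MulChar.one_apply hu] using h3
      rcases mul_self_eq_one_iff.mp h2 with h' | h' <;> rw [h'] <;> simp
    · rw [MulChar.map_nonunit _ hu]; simp
  -- basic positivity
  have hq0 : (0 : ℝ) < q := Nat.cast_pos.mpr hq.pos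
  have hs0 : (0 : ℝ) < Real.sqrt q := Real.sqrt_pos.mpr hq0
  have hs1 : (1 : ℝ) ≤ Real.sqrt q :=
    Real.one_le_sqrt.mpr (by exact_mod_cast hq.one_lt.le)
  have hss : Real.sqrt q * Real.sqrt q = q := Real.mul_self_sqrt hq0.le
  -- H < q
  have hHq : H < q := by
    have h12 : (q : ℝ) ^ ((1:ℝ)/2) * (q : ℝ) ^ ((1:ℝ)/2) = q := by
      rw [← Real.rpow_add hq0]; norm_num
    have h4 : (H : ℝ) ^ 2 * (H : ℝ) ^ 2 ≤ (q : ℝ) := by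
      calc (H : ℝ) ^ 2 * (H : ℝ) ^ 2 ≤ (q : ℝ) ^ ((1:ℝ)/2) * (q : ℝ) ^ ((1:ℝ)/2) :=
            mul_le_mul hH2 hH2 (by positivity) (by positivity)
        _ = q := h12
    have h4n : H ^ 2 * H ^ 2 ≤ q := by exact_mod_cast h4
    have hq2 : 2 ≤ q := hq.two_le
    rcases eq_or_lt_of_le hH1 with h | h
    · omega
    · have h2 : H < H ^ 2 := by nlinarith
      have h3 : H ^ 2 ≤ H ^ 2 * H ^ 2 := Nat.le_mul_of_pos_right _ (by positivity)
      omega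
  -- the shifts
  set a : ℕ → ZMod q := fun j => (j : ZMod q) + 1 with ha
  have hainj : ∀ j ∈ Finset.range H, ∀ k ∈ Finset.range H, a j = a k → j = k := by
    intro j hj k hk hjk
    have hj' : j < q := lt_trans (Finset.mem_range.mp hj) hHq
    have hk' : k < q := lt_trans (Finset.mem_range.mp hk) hHq
    have : (j : ZMod q) = k := by
      have := add_right_cancel hjk
      exact this
    calc j = (j : ZMod q).val := (ZMod.val_cast_of_lt hj').symm
      _ = (k : ZMod q).val := by rw [this]
      _ = k := ZMod.val_cast_of_lt hk'
  set T : ZMod q → ℂ := fun y => ∑ j ∈ Finset.range H, χ (y + a j) with hT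
  -- shortCharSum equals T
  have hST : ∀ x : ℕ, shortCharSum χ H x = T ((x : ZMod q)) := by
    intro x
    rw [shortCharSum, ← Finset.Ico_add_one_add_one_eq_Ioc, Finset.sum_Ico_eq_sum_range]
    have hc : x + H + 1 - (x + 1) = H := by omega
    rw [hc, hT]
    refine Finset.sum_congr rfl fun j _ => ?_
    have : ((x + 1 + j : ℕ) : ZMod q) = (x : ZMod q) + a j := by
      push_cast [ha]; ring
    rw [this]
  -- expansion of products of T
  have hexpand : ∀ (ψ : MulChar (ZMod q) ℂ) (g : ZMod q → ℂ),
      (∀ z, g z = ψ z) → True := fun _ _ _ => trivial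
  -- sum of |T|^2
  have hA : ∑ y : ZMod q, (T y) * (starRingEnd ℂ) (T y) = (H : ℂ) * ((q : ℂ) - H) := by
    have step1 : ∀ y : ZMod q, (T y) * (starRingEnd ℂ) (T y)
        = ∑ j ∈ Finset.range H, ∑ k ∈ Finset.range H, χ (y + a j) * χ⁻¹ (y + a k) := by
      intro y
      rw [hT, map_sum, Finset.sum_mul_sum]
      refine Finset.sum_congr rfl fun j _ => Finset.sum_congr rfl fun k _ => ?_
      congr 1
      rw [← MulChar.star_apply']
      rfl
    simp_rw [step1]
    rw [Finset.sum_comm]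
    have step2 : ∀ j ∈ Finset.range H, ∑ y : ZMod q, ∑ k ∈ Finset.range H,
        χ (y + a j) * χ⁻¹ (y + a k)
        = ∑ k ∈ Finset.range H, (if j = k then ((q : ℂ) - 1) else -1) := by
      intro j hj
      rw [Finset.sum_comm]
      refine Finset.sum_congr rfl fun k hk => ?_
      rw [aux_inner_A hχ1 (a j) (a k)]
      by_cases h : j = k
      · subst h; rw [if_pos rfl, if_pos rfl]
      · rw [if_neg (fun hc => h (hainj j hj k hk hc)), if_neg h]
    rw [Finset.sum_congr rfl step2]
    have step3 : ∀ j ∈ Finset.range H, ∑ k ∈ Finset.range H,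
        (if j = k then ((q : ℂ) - 1) else -1) = (q : ℂ) - H := by
      intro j hj
      have : ∀ k, (if j = k then ((q : ℂ) - 1) else -1)
          = -1 + (if j = k then ((q : ℂ) - 1) - (-1) else 0) := by
        intro k; split_ifs <;> ring
      simp_rw [this]
      rw [Finset.sum_add_distrib, Finset.sum_const, Finset.sum_ite_eq, if_pos hj]
      simp only [Finset.card_range, nsmul_eq_mul]
      ring
    rw [Finset.sum_congr rfl step3, Finset.sum_const, Finset.card_range, nsmul_eq_mul]
  -- bound on the sum of T^2
  have hB : ‖∑ y : ZMod q, (T y) * (T y)‖ ≤ (H : ℝ) ^ 2 * Real.sqrt q := by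
    have step1 : ∀ y : ZMod q, (T y) * (T y)
        = ∑ j ∈ Finset.range H, ∑ k ∈ Finset.range H, χ (y + a j) * χ (y + a k) := by
      intro y
      rw [hT, Finset.sum_mul_sum]
    simp_rw [step1]
    rw [Finset.sum_comm]
    calc ‖∑ j ∈ Finset.range H, ∑ y : ZMod q, ∑ k ∈ Finset.range H,
          χ (y + a j) * χ (y + a k)‖
        = ‖∑ j ∈ Finset.range H, ∑ k ∈ Finset.range H, ∑ y : ZMod q,
          χ (y + a j) * χ (y + a k)‖ := by
          congr 1
          exact Finset.sum_congr rfl fun j _ => Finset.sum_comm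
      _ ≤ ∑ j ∈ Finset.range H, ‖∑ k ∈ Finset.range H, ∑ y : ZMod q,
          χ (y + a j) * χ (y + a k)‖ := by
          exact norm_sum_le _ _
      _ ≤ ∑ j ∈ Finset.range H, ∑ k ∈ Finset.range H, ‖∑ y : ZMod q,
          χ (y + a j) * χ (y + a k)‖ := by
          gcongr with j hj
          exact norm_sum_le _ _
      _ ≤ ∑ _j ∈ Finset.range H, ∑ _k ∈ Finset.range H, Real.sqrt q := by
          gcongr with j hj k hk
          exact aux_inner_B hχ1 hχ2 (a j) (a k)
      _ = (H : ℝ) ^ 2 * Real.sqrt q := by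
          simp [Finset.sum_const, Finset.card_range]; ring
  -- convert to real statement
  set R : ℝ := ∑ x ∈ Finset.range q, (shortCharSum χ H x).re ^ 2 with hR
  set I : ℝ := ∑ x ∈ Finset.range q, (shortCharSum χ H x).im ^ 2 with hI
  set D : ℝ := (∑ y : ZMod q, (T y) * (T y)).re with hD
  have hRI : R + I = (H : ℝ) * ((q : ℝ) - H) := by
    have h1 : R + I = ∑ x ∈ Finset.range q, Complex.normSq (shortCharSum χ H x) := by
      rw [hR, hI, ← Finset.sum_add_distrib]
      exact Finset.sum_congr rfl fun x _ => by rw [Complex.normSq_apply]; ring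
    rw [h1]
    have h2 : ∑ x ∈ Finset.range q, Complex.normSq (shortCharSum χ H x)
        = ∑ y : ZMod q, Complex.normSq (T y) := by
      rw [← aux_sum_range_cast (fun y => Complex.normSq (T y))]
      exact Finset.sum_congr rfl fun x _ => by rw [hST x]
    rw [h2]
    have h3 : ((∑ y : ZMod q, Complex.normSq (T y) : ℝ) : ℂ) = (H : ℂ) * ((q : ℂ) - H) := by
      push_cast
      rw [← hA]
      exact Finset.sum_congr rfl fun y _ => (Complex.mul_conj (T y)).symm
    have h4 : ((∑ y : ZMod q, Complex.normSq (T y) : ℝ) : ℂ)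
        = (((H : ℝ) * ((q : ℝ) - H) : ℝ) : ℂ) := by rw [h3]; push_cast; ring
    exact_mod_cast h4
  have hRmI : R - I = D := by
    have h1 : R - I = ∑ x ∈ Finset.range q, ((shortCharSum χ H x) * (shortCharSum χ H x)).re := by
      rw [hR, hI, ← Finset.sum_sub_distrib]
      exact Finset.sum_congr rfl fun x _ => by rw [Complex.mul_re]; ring
    rw [h1, hD, Complex.re_sum]
    rw [← aux_sum_range_cast (fun y => ((T y) * (T y)).re)]
    exact Finset.sum_congr rfl fun x _ => by rw [hST x]
  have hDbound : |D| ≤ (H : ℝ) ^ 2 * Real.sqrt q := by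
    rw [hD]
    exact le_trans (Complex.abs_re_le_norm _) hB
  -- final computation
  have hqpow : (q : ℝ) ^ (-(1 : ℝ) / 2) = Real.sqrt q / q := by
    rw [neg_div, Real.rpow_neg hq0.le, ← Real.sqrt_eq_rpow, eq_div_iff hq0.ne', ← hss]
    field_simp
    rw [Real.sqrt_sq hs0.le]
  have hRval : R = ((H : ℝ) * ((q : ℝ) - H) + D) / 2 := by linarith
  have hIval : I = ((H : ℝ) * ((q : ℝ) - H) - D) / 2 := by linarith
  have key : ∀ D' : ℝ, |D'| ≤ (H : ℝ) ^ 2 * Real.sqrt q →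
      |(((H : ℝ) * ((q : ℝ) - H) + D') / 2) / q - (H : ℝ) / 2|
        ≤ 1 * (H : ℝ) ^ 2 * ((q : ℝ) ^ (-(1 : ℝ) / 2)) := by
    intro D' hD'
    rw [hqpow, one_mul]
    have heq : (((H : ℝ) * ((q : ℝ) - H) + D') / 2) / q - (H : ℝ) / 2
        = (D' - (H : ℝ) ^ 2) / (2 * q) := by
      field_simp
      ring
    rw [heq, abs_div, abs_of_pos (by positivity : (0:ℝ) < 2 * q),
      div_le_iff₀ (by positivity : (0:ℝ) < 2 * q)]
    have habs : |D' - (H : ℝ) ^ 2| ≤ 2 * ((H : ℝ) ^ 2 * Real.sqrt q) := by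
      calc |D' - (H : ℝ) ^ 2| ≤ |D'| + |(H : ℝ) ^ 2| := abs_sub _ _
        _ = |D'| + (H : ℝ) ^ 2 := by rw [_root_.abs_of_nonneg (by positivity : (0:ℝ) ≤ (H:ℝ)^2)]
        _ ≤ (H : ℝ) ^ 2 * Real.sqrt q + (H : ℝ) ^ 2 * Real.sqrt q := by
            have h2 : (H : ℝ) ^ 2 ≤ (H : ℝ) ^ 2 * Real.sqrt q :=
              le_mul_of_one_le_right (by positivity) hs1
            exact add_le_add hD' h2
        _ = 2 * ((H : ℝ) ^ 2 * Real.sqrt q) := by ring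
    calc |D' - (H : ℝ) ^ 2| ≤ 2 * ((H : ℝ) ^ 2 * Real.sqrt q) := habs
      _ = (H : ℝ) ^ 2 * (Real.sqrt q / q) * (2 * q) := by
          field_simp
  constructor
  · rw [hRval]
    exact key D hDbound
  · have : I = ((H : ℝ) * ((q : ℝ) - H) + (-D)) / 2 := by linarith
    rw [this]
    exact key (-D) (by rwa [abs_neg])
end

section
/- Let X be a standard Gaussian random variable (mean 0, variance 1). There is an absolute constant C > 0 such that for every real t ≥ 1 and every real number l, E[ sin²(πt(X−l)) / (πt(X−l))² ] = (2/t²) ∫_0^t (t−v) cos(2πlv) e^{−(2πv)²/2} dv ≤ C/t, where sin(πy)/(πy) is interpreted as 1 at y = 0. -/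
open MeasureTheory ProbabilityTheory

noncomputable def sincPi (y : ℝ) : ℝ :=
  if y = 0 then 1 else Real.sin (Real.pi * y) / (Real.pi * y)

lemma fejer (t : ℝ) (ht : 0 < t) (y : ℝ) :
    sincPi (t * y) ^ 2 = (2 / t ^ 2) * ∫ v in (0:ℝ)..t, (t - v) * Real.cos (2 * Real.pi * v * y) := by
  rcases eq_or_ne y 0 with rfl | hy
  · simp only [mul_zero, sincPi, if_pos rfl, one_pow, Real.cos_zero, mul_one, if_true]
    rw [intervalIntegral.integral_sub (intervalIntegrable_const) intervalIntegral.intervalIntegrable_id,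
      intervalIntegral.integral_const, integral_id]
    field_simp
    ring
  · have hty : t * y ≠ 0 := mul_ne_zero ht.ne' hy
    have hπ : Real.pi ≠ 0 := Real.pi_ne_zero
    set F : ℝ → ℝ := fun v => (t - v) * Real.sin (2 * Real.pi * v * y) / (2 * Real.pi * y)
      - Real.cos (2 * Real.pi * v * y) / (2 * Real.pi * y) ^ 2 with hF
    have hderiv : ∀ v ∈ Set.uIcc (0:ℝ) t, HasDerivAt F ((t - v) * Real.cos (2 * Real.pi * v * y)) v := by
      intro v _
      have harg : HasDerivAt (fun v : ℝ => 2 * Real.pi * v * y) (2 * Real.pi * y) v := by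
        simpa using ((hasDerivAt_id v).const_mul (2 * Real.pi)).mul_const y
      have hsin := harg.sin
      have hcos := harg.cos
      have h1 : HasDerivAt (fun v => (t - v) * Real.sin (2 * Real.pi * v * y) / (2 * Real.pi * y))
          (((-1) * Real.sin (2 * Real.pi * v * y)
            + (t - v) * (Real.cos (2 * Real.pi * v * y) * (2 * Real.pi * y))) / (2 * Real.pi * y)) v := by
        exact (((hasDerivAt_const v t).sub (hasDerivAt_id v)).mul hsin).div_const _ |>.congr_deriv
          (by simp only [Pi.sub_apply, id_eq]; ring)
      have h2 : HasDerivAt (fun v => Real.cos (2 * Real.pi * v * y) / (2 * Real.pi * y) ^ 2)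
          ((-Real.sin (2 * Real.pi * v * y) * (2 * Real.pi * y)) / (2 * Real.pi * y) ^ 2) v :=
        hcos.div_const _
      have := (h1.sub h2)
      refine this.congr_deriv ?_
      have h2πy : 2 * Real.pi * y ≠ 0 := by
        simp [hπ, hy]
      field_simp
      ring
    have hc : Continuous fun v : ℝ => (t - v) * Real.cos (2 * Real.pi * v * y) := by continuity
    have hint : IntervalIntegrable (fun v => (t - v) * Real.cos (2 * Real.pi * v * y)) volume 0 t :=
      hc.intervalIntegrable 0 t
    rw [intervalIntegral.integral_eq_sub_of_hasDerivAt hderiv hint]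
    have h2πy : 2 * Real.pi * y ≠ 0 := by simp [hπ, hy]
    have hcos2 : Real.cos (2 * Real.pi * t * y) = 1 - 2 * Real.sin (Real.pi * (t * y)) ^ 2 := by
      have harg : 2 * Real.pi * t * y = 2 * (Real.pi * (t * y)) := by ring
      rw [harg, Real.cos_two_mul]
      nlinarith [Real.sin_sq_add_cos_sq (Real.pi * (t * y))]
    simp only [hF]
    rw [sincPi, if_neg hty]
    rw [show (2:ℝ) * Real.pi * 0 * y = 0 by ring]
    simp only [Real.sin_zero, Real.cos_zero, mul_zero, zero_div, sub_zero, zero_mul]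
    rw [hcos2]
    field_simp
    ring

lemma integral_cos_mul_gauss (c l : ℝ) :
    ∫ x : ℝ, Real.cos (c * (x - l)) * Real.exp (-x ^ 2 / 2)
      = Real.sqrt (2 * Real.pi) * (Real.cos (c * l) * Real.exp (-c ^ 2 / 2)) := by
  have key := fourierIntegral_gaussian (b := (1/2 : ℂ)) (by norm_num) (c : ℂ)
  have key2 : (∫ x : ℝ, Complex.exp (-Complex.I * c * l) *
        (Complex.exp (Complex.I * c * x) * Complex.exp (-(1/2 : ℂ) * (x:ℂ) ^ 2)))
      = Complex.exp (-Complex.I * c * l) *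
        (((Real.pi : ℂ) / (1/2)) ^ (1/2 : ℂ) * Complex.exp (-(c:ℂ) ^ 2 / (4 * (1/2)))) := by
    rw [MeasureTheory.integral_const_mul, key]
  set G : ℝ → ℂ := fun x =>
    Complex.exp (-(1/2 : ℂ) * (x:ℂ) ^ 2 + (Complex.I * c) * x + (-Complex.I * c * l)) with hG
  have hGeq : (fun x : ℝ => Complex.exp (-Complex.I * c * l) *
      (Complex.exp (Complex.I * c * x) * Complex.exp (-(1/2 : ℂ) * (x:ℂ) ^ 2))) = G := by
    ext x
    simp only [hG, ← Complex.exp_add]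
    congr 1
    ring
  have hGint : MeasureTheory.Integrable G := integrable_cexp_quadratic' (by norm_num) _ _
  have hre := integral_re hGint
  simp only [RCLike.re_to_complex] at hre
  have hGre : ∀ x : ℝ, (G x).re = Real.cos (c * (x - l)) * Real.exp (-x ^ 2 / 2) := by
    intro x
    have harg : (-(1/2 : ℂ) * (x:ℂ) ^ 2 + (Complex.I * c) * x + (-Complex.I * c * l))
        = ((-x ^ 2 / 2 : ℝ) : ℂ) + ((c * (x - l) : ℝ) : ℂ) * Complex.I := by
      push_cast; ring
    simp only [hG, harg, Complex.exp_re, Complex.add_re, Complex.ofReal_re, Complex.mul_re,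
      Complex.ofReal_im, Complex.I_re, Complex.I_im, Complex.add_im, Complex.mul_im]
    ring_nf
  have hrhs : (Complex.exp (-Complex.I * c * l) *
        (((Real.pi : ℂ) / (1/2)) ^ (1/2 : ℂ) * Complex.exp (-(c:ℂ) ^ 2 / (4 * (1/2))))).re
      = Real.sqrt (2 * Real.pi) * (Real.cos (c * l) * Real.exp (-c ^ 2 / 2)) := by
    have h1 : ((Real.pi : ℂ) / (1/2)) = ((2 * Real.pi : ℝ) : ℂ) := by push_cast; ring
    have h2 : ((2 * Real.pi : ℝ) : ℂ) ^ (1/2 : ℂ) = ((Real.sqrt (2 * Real.pi) : ℝ) : ℂ) := by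
      rw [show (1/2 : ℂ) = ((1/2 : ℝ) : ℂ) by norm_num,
        ← Complex.ofReal_cpow (by positivity), Real.sqrt_eq_rpow]
    have h3 : (-(c:ℂ) ^ 2 / (4 * (1/2))) = ((-c ^ 2 / 2 : ℝ) : ℂ) := by push_cast; ring
    have h4 : (-Complex.I * c * l) = ((-(c * l) : ℝ) : ℂ) * Complex.I := by push_cast; ring
    rw [h1, h2, h3, h4, ← Complex.ofReal_exp, ← Complex.ofReal_mul]
    simp only [Complex.mul_re, Complex.exp_ofReal_mul_I_re, Complex.ofReal_re, Complex.ofReal_im,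
      Real.cos_neg, mul_zero, sub_zero]
    ring
  have hcong : ∫ x : ℝ, Real.cos (c * (x - l)) * Real.exp (-x ^ 2 / 2) = ∫ x : ℝ, (G x).re := by
    congr 1
    ext x
    exact (hGre x).symm
  have hintG : ∫ x : ℝ, G x = Complex.exp (-Complex.I * c * l) *
      (((Real.pi : ℂ) / (1/2)) ^ (1/2 : ℂ) * Complex.exp (-(c:ℂ) ^ 2 / (4 * (1/2)))) := by
    rw [← hGeq]
    exact key2
  rw [hcong, hre, hintG, hrhs]

lemma integral_gaussianReal_eq (g : ℝ → ℝ) :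
    ∫ x, g x ∂(gaussianReal 0 1) = ∫ x, gaussianPDFReal 0 1 x * g x := by
  rw [gaussianReal_of_var_ne_zero 0 one_ne_zero]
  have h1 : gaussianPDF 0 1 = fun x => ((Real.toNNReal (gaussianPDFReal 0 1 x) : NNReal) : ENNReal) := by
    ext x
    rfl
  rw [h1, integral_withDensity_eq_integral_smul (measurable_gaussianPDFReal 0 1).real_toNNReal g]
  congr 1
  ext x
  simp [NNReal.smul_def, Real.coe_toNNReal _ (gaussianPDFReal_nonneg 0 1 x)]

lemma gaussint (c l : ℝ) :
    ∫ x, Real.cos (c * (x - l)) ∂(gaussianReal 0 1)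
      = Real.cos (c * l) * Real.exp (-c ^ 2 / 2) := by
  rw [integral_gaussianReal_eq]
  have hpdf : ∀ x : ℝ, gaussianPDFReal 0 1 x = (Real.sqrt (2 * Real.pi))⁻¹ * Real.exp (-x ^ 2 / 2) := by
    intro x
    simp [gaussianPDFReal]
  have : ∀ x : ℝ, gaussianPDFReal 0 1 x * Real.cos (c * (x - l))
      = (Real.sqrt (2 * Real.pi))⁻¹ * (Real.cos (c * (x - l)) * Real.exp (-x ^ 2 / 2)) := by
    intro x
    rw [hpdf x]
    ring
  simp_rw [this]
  rw [MeasureTheory.integral_const_mul, integral_cos_mul_gauss]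
  have h0 : Real.sqrt (2 * Real.pi) ≠ 0 := by positivity
  field_simp

/-- The key estimate in the proof of Lemma 4.2: for a standard Gaussian `X`,
`E[sin²(πt(X-l))/(πt(X-l))²] = (2/t²) ∫_0^t (t-v) cos(2πlv) e^{-(2πv)²/2} dv ≤ C/t`. -/
theorem gaussian_fejer_average :
    ∃ C : ℝ, 0 < C ∧
      ∀ (t : ℝ), 1 ≤ t → ∀ (l : ℝ),
        (∫ x, (sincPi (t * (x - l))) ^ 2 ∂(gaussianReal 0 1) =
            (2 / t ^ 2) * ∫ v in (0 : ℝ)..t,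
              (t - v) * Real.cos (2 * Real.pi * l * v) *
                Real.exp (-(2 * Real.pi * v) ^ 2 / 2)) ∧
        (2 / t ^ 2) * (∫ v in (0 : ℝ)..t,
            (t - v) * Real.cos (2 * Real.pi * l * v) *
              Real.exp (-(2 * Real.pi * v) ^ 2 / 2)) ≤ C / t := by
  have hc0pos : 0 < Real.sqrt (Real.pi / (2 * Real.pi ^ 2)) :=
    Real.sqrt_pos.mpr (by positivity)
  set c0 := Real.sqrt (Real.pi / (2 * Real.pi ^ 2)) with hc0
  refine ⟨2 * c0, by positivity, ?_⟩
  intro t ht l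
  have ht0 : (0:ℝ) < t := lt_of_lt_of_le one_pos ht
  set γ := gaussianReal 0 1 with hγ
  constructor
  · -- the equality
    have hfe : (fun x : ℝ => sincPi (t * (x - l)) ^ 2)
        = fun x : ℝ => (2 / t ^ 2) * ∫ v in (0:ℝ)..t,
            (t - v) * Real.cos (2 * Real.pi * v * (x - l)) :=
      funext fun x => fejer t ht0 (x - l)
    rw [hfe]
    rw [MeasureTheory.integral_const_mul]
    congr 1
    simp_rw [intervalIntegral.integral_of_le ht0.le]
    have hcontu : Continuous (Function.uncurry fun (x v : ℝ) =>
        (t - v) * Real.cos (2 * Real.pi * v * (x - l))) := by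
      apply Continuous.mul
      · exact (continuous_const.sub continuous_snd)
      · exact Real.continuous_cos.comp (by continuity)
    have hInt : MeasureTheory.Integrable
        (Function.uncurry fun (x v : ℝ) => (t - v) * Real.cos (2 * Real.pi * v * (x - l)))
        (γ.prod (volume.restrict (Set.Ioc 0 t))) := by
      have hprod : γ.prod (volume.restrict (Set.Ioc 0 t))
          = (γ.prod volume).restrict (Set.univ ×ˢ Set.Ioc 0 t) := by
        rw [← Measure.prod_restrict, Measure.restrict_univ]
      refine MeasureTheory.Integrable.mono' (g := fun _ => t)
        (MeasureTheory.integrable_const t) hcontu.aestronglyMeasurable ?_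
      rw [hprod]
      filter_upwards [MeasureTheory.ae_restrict_mem
        (MeasurableSet.univ.prod measurableSet_Ioc)] with z hz
      obtain ⟨-, hz2⟩ := hz
      have h1 : |t - z.2| ≤ t := by
        rw [abs_of_nonneg (by linarith [hz2.2])]
        linarith [hz2.1]
      calc ‖(t - z.2) * Real.cos (2 * Real.pi * z.2 * (z.1 - l))‖
          = |t - z.2| * |Real.cos (2 * Real.pi * z.2 * (z.1 - l))| := by
            rw [Real.norm_eq_abs, abs_mul]
        _ ≤ t * 1 := mul_le_mul h1 (Real.abs_cos_le_one _) (abs_nonneg _) ht0.le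
        _ = t := mul_one t
    rw [MeasureTheory.integral_integral_swap hInt]
    have hinner : (fun v : ℝ => ∫ x, (t - v) * Real.cos (2 * Real.pi * v * (x - l)) ∂γ)
        = fun v : ℝ => (t - v) * Real.cos (2 * Real.pi * l * v)
            * Real.exp (-(2 * Real.pi * v) ^ 2 / 2) := by
      funext v
      rw [MeasureTheory.integral_const_mul, gaussint (2 * Real.pi * v) l,
        show 2 * Real.pi * v * l = 2 * Real.pi * l * v by ring]
      ring
    rw [hinner]
  · -- the bound
    have hE : ∀ v : ℝ, 0 < Real.exp (-(2 * Real.pi * v) ^ 2 / 2) := fun v => Real.exp_pos _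
    have hcont1 : Continuous fun v : ℝ => (t - v) * Real.cos (2 * Real.pi * l * v)
        * Real.exp (-(2 * Real.pi * v) ^ 2 / 2) := by
      apply Continuous.mul
      · exact ((continuous_const.sub continuous_id).mul
          (Real.continuous_cos.comp (by continuity)))
      · exact Real.continuous_exp.comp (by continuity)
    have hcont2 : Continuous fun v : ℝ => t * Real.exp (-(2 * Real.pi * v) ^ 2 / 2) :=
      continuous_const.mul (Real.continuous_exp.comp (by continuity))
    have h1 : (∫ v in (0:ℝ)..t, (t - v) * Real.cos (2 * Real.pi * l * v)
          * Real.exp (-(2 * Real.pi * v) ^ 2 / 2))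
        ≤ ∫ v in (0:ℝ)..t, t * Real.exp (-(2 * Real.pi * v) ^ 2 / 2) := by
      refine intervalIntegral.integral_mono_on ht0.le (hcont1.intervalIntegrable 0 t)
        (hcont2.intervalIntegrable 0 t) ?_
      intro v hv
      have h2 : (t - v) * Real.cos (2 * Real.pi * l * v) ≤ t := by
        calc (t - v) * Real.cos (2 * Real.pi * l * v) ≤ (t - v) * 1 :=
              mul_le_mul_of_nonneg_left (Real.cos_le_one _) (by linarith [hv.2])
          _ ≤ t := by linarith [hv.1]
      exact mul_le_mul_of_nonneg_right h2 (hE v).le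
    have heq : (fun v : ℝ => Real.exp (-(2 * Real.pi * v) ^ 2 / 2))
        = fun v : ℝ => Real.exp (-(2 * Real.pi ^ 2) * v ^ 2) := by
      funext v
      congr 1
      ring
    have hint : MeasureTheory.Integrable (fun v : ℝ => Real.exp (-(2 * Real.pi * v) ^ 2 / 2)) := by
      rw [heq]
      exact integrable_exp_neg_mul_sq (by positivity)
    have h3 : (∫ v in (0:ℝ)..t, Real.exp (-(2 * Real.pi * v) ^ 2 / 2)) ≤ c0 := by
      rw [intervalIntegral.integral_of_le ht0.le]
      calc (∫ v in Set.Ioc (0:ℝ) t, Real.exp (-(2 * Real.pi * v) ^ 2 / 2))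
          ≤ ∫ v : ℝ, Real.exp (-(2 * Real.pi * v) ^ 2 / 2) :=
            MeasureTheory.setIntegral_le_integral hint (Filter.Eventually.of_forall fun v => (hE v).le)
        _ = ∫ v : ℝ, Real.exp (-(2 * Real.pi ^ 2) * v ^ 2) := by rw [heq]
        _ = Real.sqrt (Real.pi / (2 * Real.pi ^ 2)) := integral_gaussian _
        _ = c0 := rfl
    have h4 : (∫ v in (0:ℝ)..t, (t - v) * Real.cos (2 * Real.pi * l * v)
          * Real.exp (-(2 * Real.pi * v) ^ 2 / 2)) ≤ t * c0 := by
      calc (∫ v in (0:ℝ)..t, (t - v) * Real.cos (2 * Real.pi * l * v)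
            * Real.exp (-(2 * Real.pi * v) ^ 2 / 2))
          ≤ ∫ v in (0:ℝ)..t, t * Real.exp (-(2 * Real.pi * v) ^ 2 / 2) := h1
        _ = t * ∫ v in (0:ℝ)..t, Real.exp (-(2 * Real.pi * v) ^ 2 / 2) :=
            intervalIntegral.integral_const_mul t _
        _ ≤ t * c0 := mul_le_mul_of_nonneg_left h3 ht0.le
    calc (2 / t ^ 2) * (∫ v in (0:ℝ)..t, (t - v) * Real.cos (2 * Real.pi * l * v)
          * Real.exp (-(2 * Real.pi * v) ^ 2 / 2))
        ≤ (2 / t ^ 2) * (t * c0) := mul_le_mul_of_nonneg_left h4 (by positivity)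
      _ = 2 * c0 / t := by
          field_simp
end
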